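/- arXiv:2301.08469 — 8 statements merged into one kernel-verified Lean document; each statement's English description precedes it below -/
import Mathlib

section
/- Let X and Y be sets equipped with transitive relations ≺_X and ≺_Y, and let f : X → Y be a surjective function such that for all x, x' ∈ X, x ≺_X x' if and only if f x ≺_Y f x'. Then for every ideal I of ≺_X the image f '' I is an ideal of ≺_Y, and the map I ↦ f '' I is a homeomorphism from the space of ideals I(≺_X) onto the space of ideals I(≺_Y). -/
/-- An ideal of a (transitive) relation `r` on `S`: a nonempty, downward closed,
directed subset of `S`. -/
def IsIdeal {S : Type*} (r : S → S → Prop) (I : Set S) : Prop :=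
  I.Nonempty ∧ (∀ a ∈ I, ∀ b, r b a → b ∈ I) ∧
    ∀ a ∈ I, ∀ b ∈ I, ∃ c ∈ I, r a c ∧ r b c

/-- The space of ideals of a relation `r`. -/
def IdealSpace {S : Type*} (r : S → S → Prop) : Type _ :=
  {I : Set S // IsIdeal r I}

/-- The topology on the space of ideals, generated by the basic sets
`[a] = {I | a ∈ I}` for `a : S`. -/
instance {S : Type*} (r : S → S → Prop) : TopologicalSpace (IdealSpace r) :=
  TopologicalSpace.generateFrom {U | ∃ a : S, U = {I : IdealSpace r | a ∈ I.1}}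

/-- A predicate is recursively enumerable (computably enumerable) if the partial
function `fun a => Part.assert (p a) fun _ => Part.some ()` is partial recursive.
(This is Mathlib's `REPred`, absent from this Mathlib version.) -/
def REPred_old {α : Type*} [Primcodable α] (p : α → Prop) : Prop :=
  Partrec fun a => Part.assert (p a) fun _ => Part.some ()

theorem stmt8 {X Y : Type*} (rX : X → X → Prop) (rY : Y → Y → Prop)
    (hrX : Transitive rX) (hrY : Transitive rY)
    (f : X → Y) (hf : Function.Surjective f)
    (hiff : ∀ x x', rX x x' ↔ rY (f x) (f x')) :
    (∀ I : Set X, IsIdeal rX I → IsIdeal rY (f '' I)) ∧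
    ∃ h : IdealSpace rX ≃ₜ IdealSpace rY,
      ∀ I : IdealSpace rX, (h I).1 = f '' I.1 := by

  have himg : ∀ I : Set X, IsIdeal rX I → IsIdeal rY (f '' I) := by
    rintro I ⟨⟨x, hx⟩, hlow, hdir⟩
    refine ⟨⟨f x, ⟨x, hx, rfl⟩⟩, ?_, ?_⟩
    · rintro a ⟨x', hx', rfl⟩ b hb
      obtain ⟨xb, rfl⟩ := hf b
      exact ⟨xb, hlow x' hx' xb ((hiff _ _).2 hb), rfl⟩
    · rintro a ⟨xa, hxa, rfl⟩ b ⟨xb, hxb, rfl⟩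
      obtain ⟨c, hc, h1, h2⟩ := hdir xa hxa xb hxb
      exact ⟨f c, ⟨c, hc, rfl⟩, (hiff _ _).1 h1, (hiff _ _).1 h2⟩
  have hpre : ∀ J : Set Y, IsIdeal rY J → IsIdeal rX (f ⁻¹' J) := by
    rintro J ⟨⟨y, hy⟩, hlow, hdir⟩
    obtain ⟨x, rfl⟩ := hf y
    refine ⟨⟨x, hy⟩, ?_, ?_⟩
    · intro a ha b hb
      exact hlow (f a) ha (f b) ((hiff _ _).1 hb)
    · intro a ha b hb
      obtain ⟨c, hc, h1, h2⟩ := hdir (f a) ha (f b) hb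
      obtain ⟨xc, rfl⟩ := hf c
      exact ⟨xc, hc, (hiff _ _).2 h1, (hiff _ _).2 h2⟩
  have hpi : ∀ I : Set X, IsIdeal rX I → f ⁻¹' (f '' I) = I := by
    rintro I ⟨hne, hlow, hdir⟩
    ext x
    constructor
    · rintro ⟨x', hx', hfx⟩
      obtain ⟨c, hc, h1, _⟩ := hdir x' hx' x' hx'
      have : rY (f x) (f c) := hfx ▸ (hiff _ _).1 h1
      exact hlow c hc x ((hiff _ _).2 this)
    · exact fun hx => ⟨x, hx, rfl⟩
  refine ⟨himg, ?_⟩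
  have hmem : ∀ (a : X) (I : IdealSpace rX), f a ∈ f '' I.1 ↔ ∃ a' : X, f a' = f a ∧ a' ∈ I.1 := by
    intro a I
    constructor
    · rintro ⟨x', hx', h⟩; exact ⟨x', h, hx'⟩
    · rintro ⟨x', h, hx'⟩; exact ⟨x', hx', h⟩
  refine ⟨⟨⟨fun I => ⟨f '' I.1, himg _ I.2⟩, fun J => ⟨f ⁻¹' J.1, hpre _ J.2⟩,
    fun I => Subtype.ext (hpi I.1 I.2),
    fun J => Subtype.ext (Set.image_preimage_eq J.1 hf)⟩, ?_, ?_⟩, fun I => rfl⟩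
  · refine continuous_generateFrom_iff.2 ?_
    rintro U ⟨b, rfl⟩
    obtain ⟨a0, rfl⟩ := hf b
    have : (fun I : IdealSpace rX => (⟨f '' I.1, himg _ I.2⟩ : IdealSpace rY)) ⁻¹'
        {J : IdealSpace rY | f a0 ∈ J.1} =
        ⋃ a : {a : X // f a = f a0}, {I : IdealSpace rX | a.1 ∈ I.1} := by
      ext I
      simp only [Set.mem_preimage, Set.mem_setOf_eq, Set.mem_iUnion]
      constructor
      · rintro ⟨x', hx', h⟩
        exact ⟨⟨x', h⟩, hx'⟩
      · rintro ⟨⟨x', h⟩, hx'⟩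
        exact ⟨x', hx', h⟩
    change IsOpen ((fun I : IdealSpace rX => (⟨f '' I.1, himg _ I.2⟩ : IdealSpace rY)) ⁻¹'
        {J : IdealSpace rY | f a0 ∈ J.1})
    rw [this]
    exact isOpen_iUnion fun a =>
      TopologicalSpace.isOpen_generateFrom_of_mem ⟨a.1, rfl⟩
  · refine continuous_generateFrom_iff.2 ?_
    rintro U ⟨a, rfl⟩
    have : (fun J : IdealSpace rY => (⟨f ⁻¹' J.1, hpre _ J.2⟩ : IdealSpace rX)) ⁻¹'
        {I : IdealSpace rX | a ∈ I.1} = {J : IdealSpace rY | f a ∈ J.1} := rfl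
    change IsOpen ((fun J : IdealSpace rY => (⟨f ⁻¹' J.1, hpre _ J.2⟩ : IdealSpace rX)) ⁻¹'
        {I : IdealSpace rX | a ∈ I.1})
    rw [this]
    exact TopologicalSpace.isOpen_generateFrom_of_mem ⟨f a, rfl⟩
end

section
/- Let T ⊆ List ℕ be a tree (a set of finite sequences closed under taking prefixes) and let ≺ be the transitive closure of the relation R on S = List ℕ × Bool generated as follows: for every nonempty σ ∈ List ℕ with immediate predecessor σ⁻ (σ with its last entry removed): (σ⁻, false) R (σ, false); (σ⁻, true) R (σ, true); (σ, false) R (σ, true); and additionally (σ⁻, true) R (σ, false) whenever σ ∉ T. If T has an infinite path, i.e. there exists x : ℕ → ℕ with [x 0, …, x (k−1)] ∈ T for every k, then the space of ideals I(≺) is not a T1 space. -/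
/-- A predicate is recursively enumerable (computably enumerable) if the partial
function `fun a => Part.assert (p a) fun _ => Part.some ()` is partial recursive.
(This is Mathlib's `REPred`, absent from this Mathlib version.) -/
def REPred' {α : Type*} [Primcodable α] (p : α → Prop) : Prop :=
  Partrec fun a => Part.assert (p a) fun _ => Part.some ()

/-- The generating relation on `List ℕ × Bool` used in the `Π¹₁`-completeness
construction: `(σ, false)` codes `σ` and `(σ, true)` codes the underlined `σ̲`. -/
def TreeRel (T : Set (List ℕ)) : (List ℕ × Bool) → (List ℕ × Bool) → Prop := fun a b =>
  ∃ σ : List ℕ, σ ≠ [] ∧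
    ((a = (σ.dropLast, false) ∧ b = (σ, false)) ∨
     (a = (σ.dropLast, true) ∧ b = (σ, true)) ∨
     (a = (σ, false) ∧ b = (σ, true)) ∨
     (σ ∉ T ∧ a = (σ.dropLast, true) ∧ b = (σ, false)))

namespace Stmt9Aux

variable (x : ℕ → ℕ)

def seg (k : ℕ) : List ℕ := List.ofFn fun i : Fin k => x i

lemma seg_ne_nil (k : ℕ) : seg x (k + 1) ≠ [] := by
  simp [seg]

lemma dropLast_seg (k : ℕ) : (seg x (k + 1)).dropLast = seg x k := by
  rw [seg, List.ofFn_succ', List.concat_eq_append, List.dropLast_concat]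
  rfl

variable (T : Set (List ℕ))

lemma stepF (k : ℕ) : TreeRel T (seg x k, false) (seg x (k + 1), false) :=
  ⟨seg x (k + 1), seg_ne_nil x k, Or.inl ⟨by rw [dropLast_seg], rfl⟩⟩

lemma stepT (k : ℕ) : TreeRel T (seg x k, true) (seg x (k + 1), true) :=
  ⟨seg x (k + 1), seg_ne_nil x k, Or.inr (Or.inl ⟨by rw [dropLast_seg], rfl⟩)⟩

lemma flipStep (k : ℕ) : TreeRel T (seg x (k + 1), false) (seg x (k + 1), true) :=
  ⟨seg x (k + 1), seg_ne_nil x k, Or.inr (Or.inr (Or.inl ⟨rfl, rfl⟩))⟩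

lemma chainF {m n : ℕ} (h : m < n) :
    Relation.TransGen (TreeRel T) (seg x m, false) (seg x n, false) := by
  induction n with
  | zero => omega
  | succ n ih =>
    rcases Nat.lt_succ_iff_lt_or_eq.mp h with h' | h'
    · exact (ih h').tail (stepF x T n)
    · subst h'; exact Relation.TransGen.single (stepF x T m)

lemma chainT {m n : ℕ} (h : m < n) :
    Relation.TransGen (TreeRel T) (seg x m, true) (seg x n, true) := by
  induction n with
  | zero => omega
  | succ n ih =>
    rcases Nat.lt_succ_iff_lt_or_eq.mp h with h' | h'
    · exact (ih h').tail (stepT x T n)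
    · subst h'; exact Relation.TransGen.single (stepT x T m)

lemma reach {m n : ℕ} (b : Bool) (h : m < n + 1) :
    Relation.TransGen (TreeRel T) (seg x m, b) (seg x (n + 1), true) := by
  cases b
  · exact (chainF x T h).tail (flipStep x T n)
  · exact chainT x T h

/-- downward closure under TransGen from single-step closure -/
lemma transGen_lower {α : Type*} {r : α → α → Prop} {I : Set α}
    (h : ∀ a ∈ I, ∀ b, r b a → b ∈ I) :
    ∀ a ∈ I, ∀ b, Relation.TransGen r b a → b ∈ I := by
  intro a ha b hba
  induction hba with
  | single h1 => exact h _ ha _ h1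
  | tail _ h2 ih => exact ih (h _ ha _ h2)

def Ifa : Set (List ℕ × Bool) := {p | ∃ k, p = (seg x k, false)}

def Jbo : Set (List ℕ × Bool) := {p | ∃ k b, p = (seg x k, b)}

variable (hx : ∀ k, seg x k ∈ T)

include hx in
lemma Ifa_step : ∀ a ∈ Ifa x, ∀ b, TreeRel T b a → b ∈ Ifa x := by
  rintro a ⟨k, rfl⟩ b ⟨σ, hσ, hc⟩
  rcases hc with ⟨hb, ha⟩ | ⟨hb, ha⟩ | ⟨hb, ha⟩ | ⟨hσT, hb, ha⟩
  · obtain ⟨rfl, -⟩ := Prod.mk.injEq .. ▸ ha.symm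
    cases k with
    | zero => exact absurd rfl hσ
    | succ k => exact ⟨k, by rw [hb, dropLast_seg]⟩
  · exact absurd (congrArg Prod.snd ha.symm) (by simp)
  · exact absurd (congrArg Prod.snd ha.symm) (by simp)
  · obtain ⟨rfl, -⟩ := Prod.mk.injEq .. ▸ ha.symm
    exact absurd (hx k) hσT

include hx in
lemma Jbo_step : ∀ a ∈ Jbo x, ∀ b, TreeRel T b a → b ∈ Jbo x := by
  rintro a ⟨k, bb, rfl⟩ b ⟨σ, hσ, hc⟩
  rcases hc with ⟨hb, ha⟩ | ⟨hb, ha⟩ | ⟨hb, ha⟩ | ⟨hσT, hb, ha⟩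
  · obtain ⟨rfl, -⟩ := Prod.mk.injEq .. ▸ ha.symm
    cases k with
    | zero => exact absurd rfl hσ
    | succ k => exact ⟨k, false, by rw [hb, dropLast_seg]⟩
  · obtain ⟨rfl, -⟩ := Prod.mk.injEq .. ▸ ha.symm
    cases k with
    | zero => exact absurd rfl hσ
    | succ k => exact ⟨k, true, by rw [hb, dropLast_seg]⟩
  · obtain ⟨rfl, -⟩ := Prod.mk.injEq .. ▸ ha.symm
    exact ⟨k, false, hb⟩
  · obtain ⟨rfl, -⟩ := Prod.mk.injEq .. ▸ ha.symm
    exact absurd (hx k) hσT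

include hx in
lemma Ifa_ideal : IsIdeal (Relation.TransGen (TreeRel T)) (Ifa x) := by
  refine ⟨⟨(seg x 0, false), 0, rfl⟩, transGen_lower (Ifa_step x T hx), ?_⟩
  rintro a ⟨m, rfl⟩ b ⟨n, rfl⟩
  refine ⟨(seg x (max m n + 1), false), ⟨_, rfl⟩, ?_, ?_⟩
  · exact chainF x T (by omega)
  · exact chainF x T (by omega)

include hx in
lemma Jbo_ideal : IsIdeal (Relation.TransGen (TreeRel T)) (Jbo x) := by
  refine ⟨⟨(seg x 0, false), 0, false, rfl⟩, transGen_lower (Jbo_step x T hx), ?_⟩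
  rintro a ⟨m, ba, rfl⟩ b ⟨n, bb, rfl⟩
  refine ⟨(seg x (max m n + 1), true), ⟨_, true, rfl⟩, ?_, ?_⟩
  · exact reach x T ba (by omega)
  · exact reach x T bb (by omega)

end Stmt9Aux

theorem stmt9 (T : Set (List ℕ)) (hT : ∀ σ ∈ T, ∀ τ, τ <+: σ → τ ∈ T)
    (hpath : ∃ x : ℕ → ℕ, ∀ k, (List.ofFn fun i : Fin k => x i) ∈ T) :
    ¬ T1Space (IdealSpace (Relation.TransGen (TreeRel T))) := by
  obtain ⟨x, hx⟩ := hpath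
  have hx' : ∀ k, Stmt9Aux.seg x k ∈ T := hx
  set r := Relation.TransGen (TreeRel T)
  let I : IdealSpace r := ⟨Stmt9Aux.Ifa x, Stmt9Aux.Ifa_ideal x T hx'⟩
  let J : IdealSpace r := ⟨Stmt9Aux.Jbo x, Stmt9Aux.Jbo_ideal x T hx'⟩
  have hsub : I.1 ⊆ J.1 := by rintro p ⟨k, rfl⟩; exact ⟨k, false, rfl⟩
  have hne : I ≠ J := by
    intro h
    have : (Stmt9Aux.seg x 0, true) ∈ I.1 := by
      rw [h]; exact ⟨0, true, rfl⟩
    obtain ⟨k, hk⟩ := this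
    exact absurd (congrArg Prod.snd hk) (by simp)
  intro ht1
  have hclosed : IsOpen ({J}ᶜ : Set (IdealSpace r)) := (isClosed_singleton (x := J)).isOpen_compl
  have key : ∀ U : Set (IdealSpace r), IsOpen U → I ∈ U → J ∈ U := by
    intro U hU
    have hU' : TopologicalSpace.GenerateOpen
        {U | ∃ a : List ℕ × Bool, U = {I : IdealSpace r | a ∈ I.1}} U := hU
    clear hU
    induction hU' with
    | basic V hV =>
      obtain ⟨a, rfl⟩ := hV
      intro h; exact hsub h
    | univ => exact fun _ => trivial
    | inter V W _ _ ihV ihW => exact fun h => ⟨ihV h.1, ihW h.2⟩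
    | sUnion S _ ih =>
      rintro ⟨V, hV, hIV⟩
      exact ⟨V, hV, ih V hV hIV⟩
  exact key _ hclosed hne (Set.mem_singleton J)
end

section
/- Let T ⊆ List ℕ be a tree (a set of finite sequences closed under taking prefixes) and let ≺ be the transitive closure of the relation R on S = List ℕ × Bool generated as follows: for every nonempty σ ∈ List ℕ with immediate predecessor σ⁻ (σ with its last entry removed): (σ⁻, false) R (σ, false); (σ⁻, true) R (σ, true); (σ, false) R (σ, true); and additionally (σ⁻, true) R (σ, false) whenever σ ∉ T. If T is well-founded, i.e. for every x : ℕ → ℕ there is k with [x 0, …, x (k−1)] ∉ T, then the space of ideals I(≺) is homeomorphic to Baire space ℕ → ℕ (with the product topology where ℕ is discrete). -/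
namespace Stmt10Aux

/-- measure that strictly increases along `TreeRel`. -/
def mu (p : List ℕ × Bool) : ℕ := 2 * p.1.length + (if p.2 then 1 else 0)

lemma mu_lt_of_step {T : Set (List ℕ)} {a b : List ℕ × Bool} (h : TreeRel T a b) :
    mu a < mu b := by
  obtain ⟨σ, hσ, h⟩ := h
  have h1 : 1 ≤ σ.length := List.length_pos_iff.mpr hσ
  have h2 : σ.dropLast.length = σ.length - 1 := List.length_dropLast
  rcases h with ⟨ha, hb⟩ | ⟨ha, hb⟩ | ⟨ha, hb⟩ | ⟨-, ha, hb⟩ <;>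
    subst ha <;> subst hb <;> simp [mu] <;> omega

lemma prefix_of_step {T : Set (List ℕ)} {a b : List ℕ × Bool} (h : TreeRel T a b) :
    a.1 <+: b.1 := by
  obtain ⟨σ, hσ, h⟩ := h
  rcases h with ⟨ha, hb⟩ | ⟨ha, hb⟩ | ⟨ha, hb⟩ | ⟨-, ha, hb⟩ <;>
    subst ha <;> subst hb <;> simp [List.dropLast_prefix]

lemma prefix_of_trans {T : Set (List ℕ)} {a b : List ℕ × Bool}
    (h : Relation.TransGen (TreeRel T) a b) : a.1 <+: b.1 := by
  induction h with
  | single h => exact prefix_of_step h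
  | tail _ h ih => exact ih.trans (prefix_of_step h)

lemma mu_lt_of_trans {T : Set (List ℕ)} {a b : List ℕ × Bool}
    (h : Relation.TransGen (TreeRel T) a b) : mu a < mu b := by
  induction h with
  | single h => exact mu_lt_of_step h
  | tail _ h ih => exact ih.trans (mu_lt_of_step h)

lemma prefix_of_concat {σ l : List ℕ} {a : ℕ} (h : σ <+: l ++ [a]) (hne : σ ≠ l ++ [a]) :
    σ <+: l := by
  have hlen : σ.length ≤ l.length := by
    have h1 := h.length_le
    simp at h1
    rcases Nat.lt_or_ge σ.length (l.length + 1) with h' | h'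
    · by_contra hc
      have : σ.length = l.length + 1 := by omega
      exact hne (h.eq_of_length (by simpa using this))
    · exact absurd (h.eq_of_length (by simp; omega)) hne
  have h2 := List.prefix_iff_eq_take.mp h
  rw [List.take_append_of_le_length hlen] at h2
  rw [List.prefix_iff_eq_take]
  rw [← List.prefix_iff_eq_take] at h2
  exact List.prefix_iff_eq_take.mp h2

lemma rel_false_false (T : Set (List ℕ)) (τ : List ℕ) :
    ∀ σ, σ <+: τ → σ ≠ τ → Relation.TransGen (TreeRel T) (σ, false) (τ, false) := by
  induction τ using List.reverseRecOn with
  | nil => intro σ h hne; exact absurd (List.prefix_nil.mp h) hne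
  | append_singleton l a ih =>
    intro σ h hne
    have hstep : TreeRel T (l, false) (l ++ [a], false) :=
      ⟨l ++ [a], by simp, Or.inl ⟨by rw [List.dropLast_concat], rfl⟩⟩
    by_cases hσ : σ = l
    · subst hσ; exact .single hstep
    · exact (ih σ (prefix_of_concat h hne) hσ).tail hstep

lemma rel_true_true (T : Set (List ℕ)) (τ : List ℕ) :
    ∀ σ, σ <+: τ → σ ≠ τ → Relation.TransGen (TreeRel T) (σ, true) (τ, true) := by
  induction τ using List.reverseRecOn with
  | nil => intro σ h hne; exact absurd (List.prefix_nil.mp h) hne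
  | append_singleton l a ih =>
    intro σ h hne
    have hstep : TreeRel T (l, true) (l ++ [a], true) :=
      ⟨l ++ [a], by simp, Or.inr (Or.inl ⟨by rw [List.dropLast_concat], rfl⟩)⟩
    by_cases hσ : σ = l
    · subst hσ; exact .single hstep
    · exact (ih σ (prefix_of_concat h hne) hσ).tail hstep

lemma step_false_true (T : Set (List ℕ)) {τ : List ℕ} (hτ : τ ≠ []) :
    TreeRel T (τ, false) (τ, true) :=
  ⟨τ, hτ, Or.inr (Or.inr (Or.inl ⟨rfl, rfl⟩))⟩

lemma rel_to_true (T : Set (List ℕ)) {σ τ : List ℕ} (h : σ <+: τ) (hne : σ ≠ τ) (b : Bool) :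
    Relation.TransGen (TreeRel T) (σ, b) (τ, true) := by
  have hτ : τ ≠ [] := by rintro rfl; exact hne (List.prefix_nil.mp h)
  cases b with
  | true => exact rel_true_true T τ σ h hne
  | false => exact (rel_false_false T τ σ h hne).tail (step_false_true T hτ)

lemma rel_false_to (T : Set (List ℕ)) {σ τ : List ℕ} (h : σ <+: τ) (hne : σ ≠ τ) (b : Bool) :
    Relation.TransGen (TreeRel T) (σ, false) (τ, b) := by
  cases b with
  | true => exact rel_to_true T h hne false
  | false => exact rel_false_false T τ σ h hne

/-! ### prefixes of a branch -/

def pref (x : ℕ → ℕ) (n : ℕ) : List ℕ := List.ofFn fun i : Fin n => x i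

@[simp] lemma pref_length (x : ℕ → ℕ) (n : ℕ) : (pref x n).length = n :=
  List.length_ofFn

lemma pref_getElem (x : ℕ → ℕ) {n i : ℕ} (h : i < n) :
    (pref x n)[i]'(by simp [h]) = x i := by
  simp [pref]

lemma pref_succ (x : ℕ → ℕ) (n : ℕ) : pref x (n + 1) = pref x n ++ [x n] := by
  show List.ofFn _ = _
  rw [List.ofFn_succ']
  simp [pref, List.concat_eq_append]

lemma pref_prefix (x : ℕ → ℕ) {n m : ℕ} (h : n ≤ m) : pref x n <+: pref x m := by
  induction m with
  | zero => have : n = 0 := by omega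
            subst this; exact List.prefix_rfl
  | succ m ih =>
    rcases Nat.lt_or_ge n (m + 1) with h' | h'
    · exact (ih (by omega)).trans (by rw [pref_succ]; exact List.prefix_append _ _)
    · have : n = m + 1 := by omega
      subst this; exact List.prefix_rfl

lemma isPref_of_prefix {x : ℕ → ℕ} {σ : List ℕ} {n : ℕ} (h : σ <+: pref x n) :
    σ = pref x σ.length := by
  have hlen : σ.length ≤ n := by simpa using h.length_le
  refine List.ext_getElem (by simp) fun i h1 h2 => ?_
  rw [h.getElem h1, pref_getElem x (h1.trans_le hlen), pref_getElem x (by simpa using h2)]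

/-- The candidate ideal attached to a branch. -/
def Br (x : ℕ → ℕ) : Set (List ℕ × Bool) := {p | p.1 = pref x p.1.length}

/-! ### structural facts about ideals -/

variable {T : Set (List ℕ)} {I : Set (List ℕ × Bool)}

lemma exists_mu (hI : IsIdeal (Relation.TransGen (TreeRel T)) I) (n : ℕ) :
    ∃ a, a ∈ I ∧ n ≤ mu a := by
  induction n with
  | zero => obtain ⟨a, ha⟩ := hI.1; exact ⟨a, ha, Nat.zero_le _⟩
  | succ n ih =>
    obtain ⟨a, ha, hn⟩ := ih
    obtain ⟨c, hc, hac, -⟩ := hI.2.2 a ha a ha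
    exact ⟨c, hc, by have := mu_lt_of_trans hac; omega⟩

lemma exists_len (hI : IsIdeal (Relation.TransGen (TreeRel T)) I) (n : ℕ) :
    ∃ a, a ∈ I ∧ n < a.1.length := by
  obtain ⟨a, ha, hn⟩ := exists_mu hI (2 * n + 2)
  have : mu a ≤ 2 * a.1.length + 1 := by unfold mu; split <;> omega
  exact ⟨a, ha, by omega⟩

lemma mem_false_of_prefix (hI : IsIdeal (Relation.TransGen (TreeRel T)) I)
    {a : List ℕ × Bool} (ha : a ∈ I) {σ : List ℕ} (hσ : σ <+: a.1) : (σ, false) ∈ I := by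
  obtain ⟨d, hd, hdlen⟩ := exists_len hI a.1.length
  obtain ⟨c, hc, hac, hdc⟩ := hI.2.2 a ha d hd
  have h1 : a.1 <+: c.1 := prefix_of_trans hac
  have h2 : d.1 <+: c.1 := prefix_of_trans hdc
  have hσc : σ <+: c.1 := hσ.trans h1
  have hne : σ ≠ c.1 := by
    intro e
    have l1 := hσ.length_le
    have l2 := h2.length_le
    rw [← e] at l2
    omega
  have : Relation.TransGen (TreeRel T) (σ, false) (c.1, c.2) := rel_false_to T hσc hne c.2
  exact hI.2.1 c hc (σ, false) (by rwa [Prod.mk.eta] at this)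

/-- The branch determined by an ideal. -/
noncomputable def branch (hI : IsIdeal (Relation.TransGen (TreeRel T)) I) : ℕ → ℕ :=
  fun n => (exists_len hI n).choose.1.getD n 0

lemma mem_isPref (hI : IsIdeal (Relation.TransGen (TreeRel T)) I)
    {a : List ℕ × Bool} (ha : a ∈ I) : a.1 = pref (branch hI) a.1.length := by
  refine List.ext_getElem (by simp) fun i h1 h2 => ?_
  obtain ⟨hbmem, hblen⟩ := (exists_len hI i).choose_spec
  set b := (exists_len hI i).choose with hb
  have hx : branch hI i = b.1[i]'hblen := by
    rw [branch, List.getD_eq_getElem _ _ hblen]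
  have hab : a.1[i] = b.1[i]'hblen := by
    obtain ⟨c, hc, hac, hbc⟩ := hI.2.2 a ha b hbmem
    have h3 := prefix_of_trans hac
    have h4 := prefix_of_trans hbc
    rcases List.prefix_or_prefix_of_prefix h3 h4 with h | h
    · exact h.getElem h1
    · exact (h.getElem hblen).symm
  rw [hab, pref_getElem _ (by simpa using h2), hx]

lemma mem_false_pref (hI : IsIdeal (Relation.TransGen (TreeRel T)) I) (n : ℕ) :
    (pref (branch hI) n, false) ∈ I := by
  obtain ⟨a, ha, hlen⟩ := exists_len hI n
  refine mem_false_of_prefix hI ha ?_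
  rw [mem_isPref hI ha]
  exact pref_prefix _ (le_of_lt hlen)

lemma mem_true_pref (hI : IsIdeal (Relation.TransGen (TreeRel T)) I)
    (hT : ∀ σ ∈ T, ∀ τ, τ <+: σ → τ ∈ T)
    (hwf : ∀ x : ℕ → ℕ, ∃ k, (List.ofFn fun i : Fin k => x i) ∉ T) (n : ℕ) :
    (pref (branch hI) n, true) ∈ I := by
  set x := branch hI with hxdef
  obtain ⟨k, hk⟩ := hwf x
  have hk' : pref x k ∉ T := hk
  set M := max k n with hM
  have hτT : pref x (M + 1) ∉ T := fun h =>
    hk' (hT _ h _ (pref_prefix x (by omega)))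
  have hτne : pref x (M + 1) ≠ [] := by
    intro e; have := congrArg List.length e; simp at this
  have hmemF : (pref x (M + 1), false) ∈ I := mem_false_pref hI (M + 1)
  have hstep : TreeRel T ((pref x (M + 1)).dropLast, true) (pref x (M + 1), false) :=
    ⟨pref x (M + 1), hτne, Or.inr (Or.inr (Or.inr ⟨hτT, rfl, rfl⟩))⟩
  have hdl : (pref x (M + 1)).dropLast = pref x M := by
    rw [pref_succ, List.dropLast_concat]
  have hMtrue : (pref x M, true) ∈ I := by
    have := hI.2.1 _ hmemF _ (Relation.TransGen.single hstep)
    rwa [hdl] at this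
  rcases eq_or_lt_of_le (le_max_right k n : n ≤ M) with h | h
  · rw [show n = M from h]; exact hMtrue
  · refine hI.2.1 _ hMtrue _ (rel_true_true T _ _ (pref_prefix x h.le) ?_)
    intro e; have := congrArg List.length e; simp at this; omega

lemma ideal_eq_Br (hI : IsIdeal (Relation.TransGen (TreeRel T)) I)
    (hT : ∀ σ ∈ T, ∀ τ, τ <+: σ → τ ∈ T)
    (hwf : ∀ x : ℕ → ℕ, ∃ k, (List.ofFn fun i : Fin k => x i) ∉ T) :
    I = Br (branch hI) := by
  ext p
  constructor
  · intro hp; exact mem_isPref hI hp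
  · rintro hp
    obtain ⟨σ, b⟩ := p
    have hσ : σ = pref (branch hI) σ.length := hp
    cases b with
    | false => rw [show (σ, false) = (pref (branch hI) σ.length, false) by rw [← hσ]]
               exact mem_false_pref hI σ.length
    | true => rw [show (σ, true) = (pref (branch hI) σ.length, true) by rw [← hσ]]
              exact mem_true_pref hI hT hwf σ.length

lemma isIdeal_Br (T : Set (List ℕ)) (x : ℕ → ℕ) :
    IsIdeal (Relation.TransGen (TreeRel T)) (Br x) := by
  refine ⟨⟨([], false), by simp [Br, pref]⟩, ?_, ?_⟩
  · intro a ha b hb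
    have h1 : b.1 <+: a.1 := prefix_of_trans hb
    have h2 : a.1 = pref x a.1.length := ha
    exact isPref_of_prefix (h2 ▸ h1)
  · intro a ha b hb
    set N := max a.1.length b.1.length + 1 with hN
    have hmem : (pref x N, true) ∈ Br x := by simp [Br]
    have key : ∀ c ∈ Br x, c.1.length < N →
        Relation.TransGen (TreeRel T) c (pref x N, true) := by
      intro c hc hlen
      have h2 : c.1 = pref x c.1.length := hc
      have hpre : c.1 <+: pref x N := h2 ▸ pref_prefix x hlen.le
      have hne : c.1 ≠ pref x N := by
        intro e; have := congrArg List.length e; simp at this; omega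
      have := rel_to_true T hpre hne c.2
      rwa [Prod.mk.eta] at this
    exact ⟨(pref x N, true), hmem, key a ha (by omega), key b hb (by omega)⟩

lemma branch_Br (T : Set (List ℕ)) (x : ℕ → ℕ) : branch (isIdeal_Br T x) = x := by
  funext n
  have hmem : ((pref x (n + 1) : List ℕ), false) ∈ Br x := by simp [Br]
  have h := mem_isPref (isIdeal_Br T x) hmem
  simp only [pref_length] at h
  have h2 := List.getElem_of_eq h (show n < (pref x (n+1)).length by simp)
  rw [pref_getElem x (by omega), pref_getElem _ (by omega)] at h2
  exact h2.symm

/-! ### the homeomorphism -/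

def toIdeal (T : Set (List ℕ)) (x : ℕ → ℕ) : IdealSpace (Relation.TransGen (TreeRel T)) :=
  ⟨Br x, isIdeal_Br T x⟩

noncomputable def theEquiv (T : Set (List ℕ)) (hT : ∀ σ ∈ T, ∀ τ, τ <+: σ → τ ∈ T)
    (hwf : ∀ x : ℕ → ℕ, ∃ k, (List.ofFn fun i : Fin k => x i) ∉ T) :
    IdealSpace (Relation.TransGen (TreeRel T)) ≃ (ℕ → ℕ) where
  toFun I := branch I.2
  invFun x := toIdeal T x
  left_inv I := Subtype.ext (ideal_eq_Br I.2 hT hwf).symm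
  right_inv x := branch_Br T x

lemma isOpen_basic (T : Set (List ℕ)) (a : List ℕ × Bool) :
    IsOpen {I : IdealSpace (Relation.TransGen (TreeRel T)) | a ∈ I.1} :=
  TopologicalSpace.isOpen_generateFrom_of_mem ⟨a, rfl⟩

lemma continuous_branch (T : Set (List ℕ)) :
    Continuous (fun I : IdealSpace (Relation.TransGen (TreeRel T)) => branch I.2) := by
  apply continuous_pi; intro n
  rw [continuous_discrete_rng]
  intro m
  have key : (fun I : IdealSpace (Relation.TransGen (TreeRel T)) => branch I.2 n) ⁻¹' {m} =
      ⋃ σ ∈ {σ : List ℕ | σ.length = n + 1 ∧ σ.getD n 0 = m},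
        {I : IdealSpace (Relation.TransGen (TreeRel T)) | (σ, false) ∈ I.1} := by
    ext I
    simp only [Set.mem_preimage, Set.mem_singleton_iff, Set.mem_iUnion, Set.mem_setOf_eq]
    constructor
    · intro hm
      refine ⟨pref (branch I.2) (n + 1), ⟨by simp, ?_⟩, mem_false_pref I.2 (n + 1)⟩
      rw [List.getD_eq_getElem _ _ (by simp), pref_getElem _ (by omega), hm]
    · rintro ⟨σ, ⟨hlen, hget⟩, hmem⟩
      have h : σ = pref (branch I.2) σ.length := mem_isPref I.2 hmem
      have h2 := List.getElem_of_eq h (show n < σ.length by omega)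
      rw [pref_getElem _ (by omega)] at h2
      rw [← hget, List.getD_eq_getElem _ _ (by omega), h2]
  rw [key]
  exact isOpen_biUnion fun σ _ => isOpen_basic T (σ, false)

lemma continuous_toIdeal (T : Set (List ℕ)) :
    Continuous (toIdeal T) := by
  apply continuous_generateFrom_iff.mpr
  rintro s ⟨⟨σ, b⟩, rfl⟩
  have key : toIdeal T ⁻¹' {I | (σ, b) ∈ I.1} =
      ⋂ i : Fin σ.length, (fun x : ℕ → ℕ => x i) ⁻¹' {σ[i]} := by
    ext x
    simp only [Set.mem_preimage, Set.mem_setOf_eq, Set.mem_iInter, Set.mem_singleton_iff]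
    constructor
    · intro h i
      have hσ : σ = pref x σ.length := h
      have h2 := List.getElem_of_eq hσ i.2
      rw [pref_getElem _ i.2] at h2
      exact h2.symm
    · intro h
      show σ = pref x σ.length
      refine List.ext_getElem (by simp) fun i h1 h2 => ?_
      rw [pref_getElem x (by simpa using h2)]
      exact (h ⟨i, h1⟩).symm
  rw [key]
  exact isOpen_iInter_of_finite fun i =>
    (continuous_apply (i : ℕ)).isOpen_preimage _ (isOpen_discrete _)

end Stmt10Aux

theorem stmt10 (T : Set (List ℕ)) (hT : ∀ σ ∈ T, ∀ τ, τ <+: σ → τ ∈ T)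
    (hwf : ∀ x : ℕ → ℕ, ∃ k, (List.ofFn fun i : Fin k => x i) ∉ T) :
    Nonempty (IdealSpace (Relation.TransGen (TreeRel T)) ≃ₜ (ℕ → ℕ)) := by
  exact ⟨{ Stmt10Aux.theEquiv T hT hwf with
    continuous_toFun := Stmt10Aux.continuous_branch T
    continuous_invFun := Stmt10Aux.continuous_toIdeal T }⟩
end

section
/- Let T ⊆ List ℕ be a tree (a set of finite sequences closed under taking prefixes) and let ≺ be the transitive closure of the relation R on S = List ℕ × Bool generated as follows: for every nonempty σ ∈ List ℕ with immediate predecessor σ⁻ (σ with its last entry removed): (σ⁻, false) R (σ, false); (σ⁻, true) R (σ, true); (σ, false) R (σ, true); and additionally (σ⁻, true) R (σ, false) whenever σ ∉ T. Then for every ideal I of ≺ there exist x : ℕ → ℕ and b ∈ Bool such that I equals the ≺-downward closure of the set {(x↾k, b) | k ∈ ℕ}, where x↾k = [x 0, …, x (k−1)] and the ≺-downward closure of a set D is D ∪ {a ∈ S | ∃ d ∈ D, a ≺ d}. -/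
/-- The downward closure of a set `D` under a relation `r`. -/
def downClosure {S : Type*} (r : S → S → Prop) (D : Set S) : Set S :=
  D ∪ {a | ∃ d ∈ D, r a d}

private def meas (a : List ℕ × Bool) : ℕ := 2 * a.1.length + cond a.2 1 0

private lemma step_mono {T : Set (List ℕ)} {a b : List ℕ × Bool} (h : TreeRel T a b) :
    a.1 <+: b.1 ∧ meas a < meas b := by
  obtain ⟨σ, hσ, h⟩ := h
  have hlen : 0 < σ.length := List.length_pos_iff.2 hσ
  rcases h with ⟨ha, hb⟩ | ⟨ha, hb⟩ | ⟨ha, hb⟩ | ⟨-, ha, hb⟩ <;>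
    subst ha <;> subst hb <;>
    simp [meas, List.dropLast_prefix, List.length_dropLast] <;> omega

private lemma tg_mono {T : Set (List ℕ)} {a b : List ℕ × Bool}
    (h : Relation.TransGen (TreeRel T) a b) : a.1 <+: b.1 ∧ meas a < meas b := by
  induction h with
  | single h => exact step_mono h
  | tail _ h ih => exact ⟨ih.1.trans (step_mono h).1, ih.2.trans (step_mono h).2⟩

private lemma up_bool (T : Set (List ℕ)) (c : Bool) : ∀ τ σ : List ℕ, σ <+: τ → σ ≠ τ →
    Relation.TransGen (TreeRel T) (σ, c) (τ, c) := by
  intro τ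
  induction τ using List.reverseRecOn with
  | nil => intro σ h hne; exact absurd (List.prefix_nil.1 h) hne
  | append_singleton l a ih =>
    intro σ h hne
    have hstep : TreeRel T (l, c) (l ++ [a], c) := by
      refine ⟨l ++ [a], by simp, ?_⟩
      cases c <;> simp
    have h' : σ <+: l := by
      rcases h with ⟨t, ht⟩
      rcases List.eq_nil_or_concat t with rfl | ⟨t', b, rfl⟩
      · exact absurd (by simpa using ht) hne
      · exact ⟨t', by have := congrArg List.dropLast ht; simpa [← List.append_assoc] using this⟩
    rcases eq_or_ne σ l with rfl | hne'
    · exact Relation.TransGen.single hstep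
    · exact (ih σ h' hne').tail hstep

private lemma up_false_true (T : Set (List ℕ)) {σ τ : List ℕ} (h : σ <+: τ) (hτ : τ ≠ []) :
    Relation.TransGen (TreeRel T) (σ, false) (τ, true) := by
  have hstep : TreeRel T (τ, false) (τ, true) := ⟨τ, hτ, Or.inr (Or.inr (Or.inl ⟨rfl, rfl⟩))⟩
  rcases eq_or_ne σ τ with rfl | hne
  · exact Relation.TransGen.single hstep
  · exact (up_bool T false τ σ h hne).tail hstep

theorem stmt11 (T : Set (List ℕ)) (hT : ∀ σ ∈ T, ∀ τ, τ <+: σ → τ ∈ T)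
    (I : Set (List ℕ × Bool)) (hI : IsIdeal (Relation.TransGen (TreeRel T)) I) :
    ∃ (x : ℕ → ℕ) (b : Bool),
      I = downClosure (Relation.TransGen (TreeRel T))
        {p : List ℕ × Bool | ∃ k : ℕ, p = (List.ofFn fun i : Fin k => x i, b)} := by
  classical
  obtain ⟨⟨a₀, ha₀⟩, hlow, hdir⟩ := hI
  -- unboundedness of the measure
  have hub : ∀ n, ∃ a ∈ I, n < meas a := by
    intro n
    induction n with
    | zero =>
      obtain ⟨c, hc, hac, -⟩ := hdir a₀ ha₀ a₀ ha₀
      exact ⟨c, hc, lt_of_le_of_lt (Nat.zero_le _) (tg_mono hac).2⟩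
    | succ n ih =>
      obtain ⟨a, ha, hn⟩ := ih
      obtain ⟨c, hc, hac, -⟩ := hdir a ha a ha
      exact ⟨c, hc, by have := (tg_mono hac).2; omega⟩
  have hlen : ∀ n, ∃ a ∈ I, n < a.1.length := by
    intro n
    obtain ⟨⟨l, c⟩, ha, h⟩ := hub (2 * n + 1)
    refine ⟨(l, c), ha, ?_⟩
    cases c <;> simp [meas] at h ⊢ <;> omega
  -- chain property
  have hchain : ∀ a ∈ I, ∀ b ∈ I, a.1 <+: b.1 ∨ b.1 <+: a.1 := by
    intro a ha b hb
    obtain ⟨c, hc, hac, hbc⟩ := hdir a ha b hb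
    exact List.prefix_or_prefix_of_prefix (tg_mono hac).1 (tg_mono hbc).1
  -- the generic branch
  set x : ℕ → ℕ := fun n => ((hlen n).choose).1.getD n 0 with hxdef
  have hxspec : ∀ n, (hlen n).choose ∈ I ∧ n < ((hlen n).choose).1.length :=
    fun n => (hlen n).choose_spec
  -- consistency
  have key : ∀ a ∈ I, ∀ k, k < a.1.length → a.1.getD k 0 = x k := by
    intro a ha k hk
    obtain ⟨hbI, hbk⟩ := hxspec k
    have hpre : ∀ {l₁ l₂ : List ℕ}, l₁ <+: l₂ → k < l₁.length → l₁.getD k 0 = l₂.getD k 0 := by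
      intro l₁ l₂ h hk
      rw [List.getD_eq_getElem _ _ hk, List.getD_eq_getElem _ _ (lt_of_lt_of_le hk h.length_le)]
      exact h.getElem hk
    rcases hchain a ha _ hbI with h | h
    · exact hpre h hk
    · exact (hpre h hbk).symm
  have canon : ∀ a ∈ I, a.1 = List.ofFn (fun i : Fin a.1.length => x i) := by
    intro a ha
    apply List.ext_getElem (by simp)
    intro i h1 h2
    have := key a ha i h1
    rw [List.getD_eq_getElem _ _ h1] at this
    simp only [List.getElem_ofFn]
    exact this
  have ofFn_pref : ∀ k m : ℕ, k ≤ m →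
      (List.ofFn fun i : Fin k => x i) <+: (List.ofFn fun i : Fin m => x i) := by
    intro k m hkm
    have : (List.ofFn fun i : Fin m => x i).take k = List.ofFn fun i : Fin k => x i := by
      apply List.ext_getElem (by simp [hkm]) (fun i h1 h2 => by simp)
    rw [← this]
    exact List.take_prefix _ _
  have ofFn_len : ∀ k : ℕ, (List.ofFn fun i : Fin k => x i).length = k := fun k => by simp
  by_cases htrue : ∀ n, ∃ a ∈ I, n < a.1.length ∧ a.2 = true
  · refine ⟨x, true, ?_⟩
    ext a
    constructor
    · intro ha
      obtain ⟨c, hc, hac, -⟩ := hdir a ha a ha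
      have hcanon := canon c hc
      cases hcb : c.2 with
      | true =>
        refine Or.inr ⟨c, ⟨c.1.length, ?_⟩, hac⟩
        rw [← hcanon, ← hcb]
      | false =>
        have hmeas := (tg_mono hac).2
        have hne : c.1 ≠ [] := by
          intro h
          unfold meas at hmeas
          rw [h, hcb] at hmeas
          simp at hmeas
        refine Or.inr ⟨(c.1, true), ⟨c.1.length, by rw [← hcanon]⟩, ?_⟩
        have : c = (c.1, false) := by rw [← hcb]
        rw [this] at hac
        exact hac.tail ⟨c.1, hne, Or.inr (Or.inr (Or.inl ⟨rfl, rfl⟩))⟩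
    · intro ha
      have hD : ∀ k : ℕ, ((List.ofFn fun i : Fin k => x i, true) : List ℕ × Bool) ∈ I := by
        intro k
        obtain ⟨a, haI, hk, ha2⟩ := htrue k
        have hcanon := canon a haI
        have hpre := ofFn_pref k a.1.length (le_of_lt hk)
        have hne : (List.ofFn fun i : Fin k => x i) ≠ List.ofFn fun i : Fin a.1.length => x i := by
          intro h
          have := congrArg List.length h
          simp at this
          omega
        have : a = ((List.ofFn fun i : Fin a.1.length => x i), true) := by
          rw [← hcanon, ← ha2]
        rw [this] at haI
        exact hlow _ haI _ (by rw [hcanon] at hpre hne ⊢; exact up_bool T true _ _ hpre hne)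
      rcases ha with ⟨k, hk⟩ | ⟨d, ⟨k, hk⟩, had⟩
      · rw [hk]; exact hD k
      · exact hlow d (hk ▸ hD k) a had
  · push_neg at htrue
    obtain ⟨N, hN⟩ := htrue
    refine ⟨x, false, ?_⟩
    ext a
    constructor
    · intro ha
      obtain ⟨t, htI, htN⟩ := hlen N
      obtain ⟨c, hc, hac, htc⟩ := hdir a ha t htI
      have hclen : N < c.1.length := lt_of_lt_of_le htN (tg_mono htc).1.length_le
      have hcb : c.2 = false := Bool.eq_false_iff.2 (hN c hc hclen)
      refine Or.inr ⟨c, ⟨c.1.length, ?_⟩, hac⟩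
      rw [← canon c hc, ← hcb]
    · intro ha
      have hD : ∀ k : ℕ, ((List.ofFn fun i : Fin k => x i, false) : List ℕ × Bool) ∈ I := by
        intro k
        obtain ⟨haI, hk⟩ := hxspec k
        set a := (hlen k).choose
        have hcanon := canon a haI
        have hpre : (List.ofFn fun i : Fin k => x i) <+: a.1 := by
          rw [hcanon]; exact ofFn_pref k a.1.length (le_of_lt hk)
        cases hab : a.2 with
        | false =>
          have hne : (List.ofFn fun i : Fin k => x i) ≠ a.1 := by
            intro h
            have := congrArg List.length h
            simp at this
            omega
          have : a = (a.1, false) := by rw [← hab]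
          rw [this] at haI
          exact hlow _ haI _ (up_bool T false _ _ hpre hne)
        | true =>
          have hne : a.1 ≠ [] := by
            intro h; rw [h] at hk; simp at hk
          have : a = (a.1, true) := by rw [← hab]
          rw [this] at haI
          exact hlow _ haI _ (up_false_true T hpre hne)
      rcases ha with ⟨k, hk⟩ | ⟨d, ⟨k, hk⟩, had⟩
      · rw [hk]; exact hD k
      · exact hlow d (hk ▸ hD k) a had
end

section
/- Let T ⊆ List ℕ be a tree (a set of finite sequences closed under taking prefixes) containing the empty sequence, and let ≺ be the transitive closure of the relation R on S = List ℕ ⊕ (List ℕ × Bool) generated as follows (inl σ codes the symbol σ̲, inr (σ, false) codes [σ,∞], inr (σ, true) codes [σ,∞*]): for every σ ∈ List ℕ and b ∈ Bool: inr (σ, b) R inl σ and inl σ R inl σ; for every nonempty σ with immediate predecessor σ⁻ and every b: inr (σ⁻, b) R inr (σ, b); and additionally, whenever σ is nonempty and σ ∉ T: inr (σ⁻, true) R inr (σ, false) and inr (σ, false) R inr (σ, true). If T has an infinite path, i.e. there exists x : ℕ → ℕ with [x 0, …, x (k−1)] ∈ T for every k, then the space of ideals I(≺) is a T1 space but is not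 Hausdorff. -/
/-- The generating relation of the telophase-type space: `Sum.inl σ` codes the
symbol `σ̲`, `Sum.inr (σ, false)` codes `[σ,∞]` and `Sum.inr (σ, true)` codes `[σ,∞*]`. -/
def TeloRel (T : Set (List ℕ)) :
    (List ℕ ⊕ (List ℕ × Bool)) → (List ℕ ⊕ (List ℕ × Bool)) → Prop := fun a b =>
  (∃ (σ : List ℕ) (c : Bool), a = Sum.inr (σ, c) ∧ b = Sum.inl σ) ∨
  (∃ σ : List ℕ, a = Sum.inl σ ∧ b = Sum.inl σ) ∨
  (∃ (σ : List ℕ) (c : Bool), σ ≠ [] ∧ a = Sum.inr (σ.dropLast, c) ∧ b = Sum.inr (σ, c)) ∨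
  (∃ σ : List ℕ, σ ≠ [] ∧ σ ∉ T ∧
    ((a = Sum.inr (σ.dropLast, true) ∧ b = Sum.inr (σ, false)) ∨
     (a = Sum.inr (σ, false) ∧ b = Sum.inr (σ, true))))

namespace Telo

abbrev Sp : Type := List ℕ ⊕ (List ℕ × Bool)

def listS : Sp → List ℕ
  | Sum.inl σ => σ
  | Sum.inr p => p.1

@[simp] lemma listS_inl (σ : List ℕ) : listS (Sum.inl σ) = σ := rfl
@[simp] lemma listS_inr (p : List ℕ × Bool) : listS (Sum.inr p) = p.1 := rfl

def rankS : Sp → ℕ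
  | Sum.inl σ => 2 * σ.length + 2
  | Sum.inr (σ, c) => 2 * σ.length + (if c then 1 else 0)

variable {T : Set (List ℕ)}

lemma rel_rank_le {a b : Sp} (h : TeloRel T a b) : rankS a ≤ rankS b := by
  rcases h with ⟨σ,c,ha,hb⟩ | ⟨σ,ha,hb⟩ | ⟨σ,c,hσ,ha,hb⟩ | ⟨σ,hσ,hσT,(⟨ha,hb⟩|⟨ha,hb⟩)⟩ <;>
      subst ha <;> subst hb <;>
      simp only [rankS] <;>
      try cases c
  all_goals try (have h1 : 1 ≤ σ.length := List.length_pos_iff.2 hσ)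
  all_goals simp_all [List.length_dropLast]
  all_goals omega

lemma rel_rank_lt {p : List ℕ × Bool} {b : Sp} (h : TeloRel T (Sum.inr p) b) :
    rankS (Sum.inr p) < rankS b := by
  rcases h with ⟨σ,c,ha,hb⟩ | ⟨σ,ha,hb⟩ | ⟨σ,c,hσ,ha,hb⟩ | ⟨σ,hσ,hσT,(⟨ha,hb⟩|⟨ha,hb⟩)⟩ <;>
      [skip; exact absurd ha (by simp); skip; skip; skip] <;>
      (obtain rfl : p = _ := by injection ha) <;> subst hb <;>
      simp only [rankS] <;>
      try cases c
  all_goals try (have h1 : 1 ≤ σ.length := List.length_pos_iff.2 hσ)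
  all_goals simp_all [List.length_dropLast]
  all_goals omega

lemma tg_rank_le {a b : Sp} (h : Relation.TransGen (TeloRel T) a b) : rankS a ≤ rankS b := by
  induction h with
  | single r => exact rel_rank_le r
  | tail h' r ih => exact le_trans ih (rel_rank_le r)

lemma tg_rank_lt {p : List ℕ × Bool} {b : Sp} (h : Relation.TransGen (TeloRel T) (Sum.inr p) b) :
    rankS (Sum.inr p) < rankS b := by
  induction h with
  | single r => exact rel_rank_lt r
  | tail h' r ih => exact lt_of_lt_of_le ih (rel_rank_le r)

lemma rel_inl_eq {σ : List ℕ} {b : Sp} (h : TeloRel T (Sum.inl σ) b) : b = Sum.inl σ := by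
  rcases h with ⟨σ',c,ha,hb⟩ | ⟨σ',ha,hb⟩ | ⟨σ',c,hσ,ha,hb⟩ | ⟨σ',hσ,hσT,(⟨ha,hb⟩|⟨ha,hb⟩)⟩
  · exact absurd ha (by simp)
  · obtain rfl : σ = σ' := Sum.inl.inj ha; exact hb
  · exact absurd ha (by simp)
  · exact absurd ha (by simp)
  · exact absurd ha (by simp)

lemma tg_inl_eq {σ : List ℕ} {b : Sp} (h : Relation.TransGen (TeloRel T) (Sum.inl σ) b) :
    b = Sum.inl σ := by
  induction h with
  | single r => exact rel_inl_eq r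
  | tail h' r ih => subst ih; exact rel_inl_eq r

lemma rel_prefix {a b : Sp} (h : TeloRel T a b) : listS a <+: listS b := by
  rcases h with ⟨σ,c,ha,hb⟩ | ⟨σ,ha,hb⟩ | ⟨σ,c,hσ,ha,hb⟩ | ⟨σ,hσ,hσT,(⟨ha,hb⟩|⟨ha,hb⟩)⟩ <;>
    subst ha <;> subst hb <;> simp [listS, List.dropLast_prefix]

lemma tg_prefix {a b : Sp} (h : Relation.TransGen (TeloRel T) a b) : listS a <+: listS b := by
  induction h with
  | single r => exact rel_prefix r
  | tail h' r ih => exact ih.trans (rel_prefix r)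

lemma rel_inr {a : Sp} {q : List ℕ × Bool} (h : TeloRel T a (Sum.inr q)) :
    ∃ p, a = Sum.inr p := by
  rcases h with ⟨σ,c,ha,hb⟩ | ⟨σ,ha,hb⟩ | ⟨σ,c,hσ,ha,hb⟩ | ⟨σ,hσ,hσT,(⟨ha,hb⟩|⟨ha,hb⟩)⟩
  · exact absurd hb (by simp)
  · exact absurd hb (by simp)
  · exact ⟨_, ha⟩
  · exact ⟨_, ha⟩
  · exact ⟨_, ha⟩

lemma tg_inr {a b : Sp} (h : Relation.TransGen (TeloRel T) a b) :
    ∀ q, b = Sum.inr q → ∃ p, a = Sum.inr p := by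
  induction h with
  | single r => intro q hq; subst hq; exact rel_inr r
  | tail h' r ih =>
      intro q hq; subst hq
      obtain ⟨p', hp⟩ := rel_inr r
      exact ih p' hp


lemma step_tree {ρ : List ℕ} {c : Bool} {a : ℕ} :
    TeloRel T (Sum.inr (ρ, c)) (Sum.inr (ρ ++ [a], c)) :=
  Or.inr (Or.inr (Or.inl ⟨ρ ++ [a], c, by simp, by rw [List.dropLast_concat], rfl⟩))

lemma prefix_tg_aux (c : Bool) (ρ : List ℕ) (s : List ℕ) (hs : s ≠ []) :
    Relation.TransGen (TeloRel T) (Sum.inr (ρ, c)) (Sum.inr (ρ ++ s, c)) := by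
  induction s using List.reverseRecOn with
  | nil => exact absurd rfl hs
  | append_singleton s a ih =>
      rcases eq_or_ne s [] with rfl | hs'
      · simpa using Relation.TransGen.single (step_tree (a := a))
      · have := Relation.TransGen.tail (ih hs') (step_tree (ρ := ρ ++ s) (a := a))
        simpa using this

lemma prefix_tg {ρ τ : List ℕ} (c : Bool) (hp : ρ <+: τ) (hne : ρ ≠ τ) :
    Relation.TransGen (TeloRel T) (Sum.inr (ρ, c)) (Sum.inr (τ, c)) := by
  obtain ⟨s, rfl⟩ := hp
  have hs : s ≠ [] := by rintro rfl; simp at hne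
  exact prefix_tg_aux c ρ s hs

lemma step_to_inl {σ : List ℕ} {c : Bool} :
    TeloRel T (Sum.inr (σ, c)) (Sum.inl σ) := Or.inl ⟨σ, c, rfl, rfl⟩

lemma inl_loop {σ : List ℕ} : TeloRel T (Sum.inl σ) (Sum.inl σ) :=
  Or.inr (Or.inl ⟨σ, rfl, rfl⟩)

lemma prefix_inl {ρ σ : List ℕ} (c : Bool) (hp : ρ <+: σ) :
    Relation.TransGen (TeloRel T) (Sum.inr (ρ, c)) (Sum.inl σ) := by
  rcases eq_or_ne ρ σ with rfl | hne
  · exact Relation.TransGen.single step_to_inl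
  · exact Relation.TransGen.tail (prefix_tg c hp hne) step_to_inl

lemma prefix_dropLast {ρ τ : List ℕ} (hp : ρ <+: τ) (hne : ρ ≠ τ) : ρ <+: τ.dropLast := by
  obtain ⟨s, rfl⟩ := hp
  have hs : s ≠ [] := by rintro rfl; simp at hne
  rw [List.dropLast_append_of_ne_nil hs]
  exact ⟨s.dropLast, rfl⟩

/-- Lemma D: below a sequence that is out of `T`, any boolean can reach any boolean. -/
lemma lemD {ρ τ : List ℕ} (hp : ρ <+: τ) (hne : ρ ≠ τ) (hτT : τ ∉ T) (hτnil : τ ≠ [])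
    (d c : Bool) :
    Relation.TransGen (TeloRel T) (Sum.inr (ρ, d)) (Sum.inr (τ, c)) := by
  have cross1 : TeloRel T (Sum.inr (τ.dropLast, true)) (Sum.inr (τ, false)) :=
    Or.inr (Or.inr (Or.inr ⟨τ, hτnil, hτT, Or.inl ⟨rfl, rfl⟩⟩))
  have cross2 : TeloRel T (Sum.inr (τ, false)) (Sum.inr (τ, true)) :=
    Or.inr (Or.inr (Or.inr ⟨τ, hτnil, hτT, Or.inr ⟨rfl, rfl⟩⟩))
  rcases Bool.eq_false_or_eq_true d with rfl | rfl <;>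
    rcases Bool.eq_false_or_eq_true c with rfl | rfl
  · exact prefix_tg true hp hne
  · -- true → false : go up with true to dropLast, then cross
    have hpd := prefix_dropLast hp hne
    rcases eq_or_ne ρ τ.dropLast with rfl | hne'
    · exact Relation.TransGen.single cross1
    · exact Relation.TransGen.tail (prefix_tg true hpd hne') cross1
  · exact Relation.TransGen.tail (prefix_tg false hp hne) cross2
  · exact prefix_tg false hp hne

/-- booleans are preserved under the order below sequences all of whose prefixes are in `T`. -/
lemma rel_bool {s : Sp} {β : List ℕ} {e : Bool} (r : TeloRel T s (Sum.inr (β, e)))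
    (hβ : ∀ σ, σ <+: β → σ ∈ T) : s = Sum.inr (β.dropLast, e) ∧ β ≠ [] := by
  rcases r with ⟨σ,c,ha,hb⟩ | ⟨σ,ha,hb⟩ | ⟨σ,c,hσ,ha,hb⟩ | ⟨σ,hσ,hσT,(⟨ha,hb⟩|⟨ha,hb⟩)⟩
  · exact absurd hb (by simp)
  · exact absurd hb (by simp)
  · injection hb with h; injection h with h1 h2; subst h1; subst h2; exact ⟨ha, hσ⟩
  · injection hb with h; injection h with h1 h2; subst h1
    exact absurd (hβ _ (List.prefix_refl _)) hσT
  · injection hb with h; injection h with h1 h2; subst h1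
    exact absurd (hβ _ (List.prefix_refl _)) hσT

lemma tg_bool {s t : Sp} (h : Relation.TransGen (TeloRel T) s t) :
    ∀ β e, t = Sum.inr (β, e) → (∀ σ, σ <+: β → σ ∈ T) → ∃ α, s = Sum.inr (α, e) := by
  induction h with
  | single r =>
      intro β e ht hβ; subst ht
      exact ⟨β.dropLast, (rel_bool r hβ).1⟩
  | tail h' r ih =>
      intro β e ht hβ; subst ht
      obtain ⟨hmid, -⟩ := rel_bool r hβ
      exact ih β.dropLast e hmid fun σ hσ => hβ σ (hσ.trans (List.dropLast_prefix β))

/-- downward closure under single steps gives closure under the transitive closure -/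
lemma tg_closed {M : Set Sp} (hM : ∀ y ∈ M, ∀ a, TeloRel T a y → a ∈ M) :
    ∀ a y, Relation.TransGen (TeloRel T) a y → y ∈ M → a ∈ M := by
  intro a y h
  induction h with
  | single r => exact fun hy => hM _ hy _ r
  | tail h' r ih => exact fun hy => ih (hM _ hy _ r)

/-- the principal ideal of `Sum.inl σ` -/
def Dset (T : Set (List ℕ)) (σ : List ℕ) : Set Sp :=
  {a | Relation.TransGen (TeloRel T) a (Sum.inl σ)}

lemma inl_mem_Dset {σ : List ℕ} : Sum.inl σ ∈ Dset T σ :=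
  Relation.TransGen.single inl_loop

lemma Dset_ideal (σ : List ℕ) : IsIdeal (Relation.TransGen (TeloRel T)) (Dset T σ) := by
  refine ⟨⟨Sum.inl σ, inl_mem_Dset⟩, ?_, ?_⟩
  · intro a ha b hb; exact hb.trans ha
  · intro a ha b hb
    exact ⟨Sum.inl σ, inl_mem_Dset, ha, hb⟩

section Ideals

variable {I J : Set Sp} (hI : IsIdeal (Relation.TransGen (TeloRel T)) I)

include hI

lemma rank_unbounded (hno : ∀ σ, Sum.inl σ ∉ I) : ∀ n, ∃ a ∈ I, n ≤ rankS a := by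
  intro n
  induction n with
  | zero => obtain ⟨a, ha⟩ := hI.1; exact ⟨a, ha, Nat.zero_le _⟩
  | succ n ih =>
      obtain ⟨a, haI, hn⟩ := ih
      obtain ⟨c, hcI, hac, -⟩ := hI.2.2 a haI a haI
      match a, haI, hn, hac with
      | Sum.inl σ, haI, _, _ => exact absurd haI (hno σ)
      | Sum.inr p, haI, hn, hac =>
          exact ⟨c, hcI, by have := tg_rank_lt hac; omega⟩

/-- any two elements of an ideal have prefix-comparable underlying sequences -/
lemma ideal_comparable {a b : Sp} (ha : a ∈ I) (hb : b ∈ I) :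
    listS a <+: listS b ∨ listS b <+: listS a := by
  obtain ⟨c, -, hac, hbc⟩ := hI.2.2 a ha b hb
  exact List.prefix_or_prefix_of_prefix (tg_prefix hac) (tg_prefix hbc)

/-- an element of an ideal of length `> n`, when the ideal contains no `inl` -/
lemma long_elem (hno : ∀ σ, Sum.inl σ ∉ I) (n : ℕ) :
    ∃ ρ d, Sum.inr (ρ, d) ∈ I ∧ n ≤ ρ.length := by
  obtain ⟨a, haI, hn⟩ := rank_unbounded hI hno (2 * n)
  match a, haI, hn with
  | Sum.inl σ, haI, _ => exact absurd haI (hno σ)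
  | Sum.inr (ρ, d), haI, hn =>
      refine ⟨ρ, d, haI, ?_⟩
      have : rankS (Sum.inr (ρ, d)) ≤ 2 * ρ.length + 1 := by
        simp only [rankS]; cases d <;> simp
      omega

end Ideals

/-- The key incomparability lemma: distinct ideals are incomparable under inclusion. -/
lemma ideal_incomp (hnil : ([] : List ℕ) ∈ T)
    (hT : ∀ σ ∈ T, ∀ τ, τ <+: σ → τ ∈ T)
    {I J : Set Sp} (hI : IsIdeal (Relation.TransGen (TeloRel T)) I)
    (hJ : IsIdeal (Relation.TransGen (TeloRel T)) J) (hsub : I ⊆ J) : I = J := by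
  refine Set.Subset.antisymm hsub ?_
  by_cases hA : ∃ σ, Sum.inl σ ∈ I
  · -- I contains a top element inl σ
    obtain ⟨σ, hσ⟩ := hA
    intro b hb
    obtain ⟨c, hcJ, hbc, hσc⟩ := hJ.2.2 b hb (Sum.inl σ) (hsub hσ)
    have hc : c = Sum.inl σ := tg_inl_eq hσc
    subst hc
    exact hI.2.1 _ hσ b hbc
  · push_neg at hA
    -- J contains no inl either
    have hAJ : ∀ σ, Sum.inl σ ∉ J := by
      intro σ hσJ
      obtain ⟨a, haI, hn⟩ := rank_unbounded hI hA (2 * σ.length + 3)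
      obtain ⟨c, hcJ, hac, hσc⟩ := hJ.2.2 a (hsub haI) (Sum.inl σ) hσJ
      have hc : c = Sum.inl σ := tg_inl_eq hσc
      subst hc
      have := tg_rank_le hac
      have h2 : rankS (Sum.inl σ) = 2 * σ.length + 2 := rfl
      omega
    intro b hbJ
    obtain ⟨ρ, d, rfl⟩ : ∃ ρ d, b = Sum.inr (ρ, d) := by
      match b, hbJ with
      | Sum.inl σ, hbJ => exact absurd hbJ (hAJ σ)
      | Sum.inr (ρ, d), _ => exact ⟨ρ, d, rfl⟩
    by_cases hcase : ∀ a ∈ I, ∀ σ, σ <+: listS a → σ ∈ T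
    · -- Case 1 : all sequences in I lie entirely in T
      obtain ⟨τ, c, haI, hτ⟩ := long_elem hI hA (ρ.length + 1)
      have hρτ : ρ <+: τ := by
        rcases ideal_comparable hJ hbJ (hsub haI) with h | h
        · exact h
        · simp only [listS_inr] at h
          have := h.length_le; omega
      have hne : ρ ≠ τ := fun h => by subst h; omega
      rcases eq_or_ne c d with rfl | hcd
      · exact hI.2.1 _ haI _ (prefix_tg c hρτ hne)
      · -- impossible : booleans are preserved here
        exfalso
        obtain ⟨u, huJ, hau, hbu⟩ := hJ.2.2 _ (hsub haI) _ hbJ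
        obtain ⟨π, e, rfl⟩ : ∃ π e, u = Sum.inr (π, e) := by
          match u, huJ with
          | Sum.inl σ, huJ => exact absurd huJ (hAJ σ)
          | Sum.inr (π, e), _ => exact ⟨π, e, rfl⟩
        obtain ⟨τ', c', ha'I, hτ'⟩ := long_elem hI hA π.length
        have hπτ' : π <+: τ' := by
          rcases ideal_comparable hJ huJ (hsub ha'I) with h | h
          · exact h
          · simp only [listS_inr] at h
            have heq : τ' = π := h.eq_of_length_le hτ'
            rw [heq]
        have hπT : ∀ σ', σ' <+: π → σ' ∈ T := fun σ' hσ' =>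
          hcase _ ha'I σ' (by simpa only [listS_inr] using hσ'.trans hπτ')
        obtain ⟨α, hα⟩ := tg_bool hau π e rfl hπT
        obtain ⟨α', hα'⟩ := tg_bool hbu π e rfl hπT
        injection hα with h1; injection hα' with h2
        have hc : c = e := congrArg Prod.snd h1
        have hd : d = e := congrArg Prod.snd h2
        exact hcd (hc.trans hd.symm)
    · -- Case 2 : some sequence in I leaves T ; cross links are available
      push_neg at hcase
      obtain ⟨a₀, ha₀I, σ₀, hσ₀p, hσ₀T⟩ := hcase
      obtain ⟨τ, c, haI, hτ⟩ := long_elem hI hA (max (ρ.length + 1) (listS a₀).length)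
      have hτ₀τ : listS a₀ <+: τ := by
        rcases ideal_comparable hI ha₀I haI with h | h
        · exact h
        · simp only [listS_inr] at h
          have heq : τ = listS a₀ := h.eq_of_length_le (le_trans (le_max_right _ _) hτ)
          rw [heq]
      have hσ₀τ : σ₀ <+: τ := hσ₀p.trans hτ₀τ
      have hρτ : ρ <+: τ := by
        rcases ideal_comparable hJ hbJ (hsub haI) with h | h
        · exact h
        · simp only [listS_inr] at h
          have := h.length_le; omega
      have hne : ρ ≠ τ := fun h => by subst h; omega
      have hτT : τ ∉ T := fun h => hσ₀T (hT τ h σ₀ hσ₀τ)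
      have hτnil : τ ≠ [] := by
        rintro rfl
        rw [List.prefix_nil] at hσ₀τ
        subst hσ₀τ
        exact hσ₀T hnil
      exact hI.2.1 _ haI _ (lemD hρτ hne hτT hτnil d c)

/-- the path ideal along an infinite branch `x`, with boolean component `b` -/
def seg (x : ℕ → ℕ) (k : ℕ) : List ℕ := List.ofFn fun i : Fin k => x i

@[simp] lemma seg_length (x : ℕ → ℕ) (k : ℕ) : (seg x k).length = k := List.length_ofFn

@[simp] lemma seg_zero (x : ℕ → ℕ) : seg x 0 = [] := rfl

lemma seg_dropLast (x : ℕ → ℕ) (k : ℕ) : (seg x (k + 1)).dropLast = seg x k := by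
  rw [seg, List.ofFn_succ']
  simp [seg]

lemma seg_prefix (x : ℕ → ℕ) {k n : ℕ} (h : k ≤ n) : seg x k <+: seg x n := by
  have : seg x k = (seg x n).take k := by
    apply List.ext_getElem
    · simp [h]
    · intro i h1 h2
      simp [seg]
  rw [this]
  exact List.take_prefix _ _

lemma seg_ne {x : ℕ → ℕ} {k n : ℕ} (h : k ≠ n) : seg x k ≠ seg x n := fun he => by
  have := congrArg List.length he
  simp at this
  exact h this

def Jset (T : Set (List ℕ)) (x : ℕ → ℕ) (b : Bool) : Set Sp :=
  {a | ∃ k, a = Sum.inr (seg x k, b)}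

lemma Jset_ideal {x : ℕ → ℕ} (hx : ∀ k, seg x k ∈ T) (b : Bool) :
    IsIdeal (Relation.TransGen (TeloRel T)) (Jset T x b) := by
  refine ⟨⟨Sum.inr (seg x 0, b), 0, rfl⟩, ?_, ?_⟩
  · intro a ha c hca
    refine tg_closed (M := Jset T x b) ?_ c a hca ha
    rintro y ⟨k, rfl⟩ a r
    rcases r with ⟨σ,c,ha',hb⟩ | ⟨σ,ha',hb⟩ | ⟨σ,c,hσ,ha',hb⟩ | ⟨σ,hσ,hσT,(⟨ha',hb⟩|⟨ha',hb⟩)⟩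
    · exact absurd hb (by simp)
    · exact absurd hb (by simp)
    · injection hb with h; injection h with h1 h2
      subst h2
      match k, h1, hσ with
      | 0, h1, hσ => exact absurd h1.symm hσ
      | k + 1, h1, hσ =>
          refine ⟨k, ?_⟩
          rw [ha', ← h1, seg_dropLast]
    · injection hb with h; injection h with h1 h2
      exact absurd (h1 ▸ hx k) hσT
    · injection hb with h; injection h with h1 h2
      exact absurd (h1 ▸ hx k) hσT
  · rintro a ⟨k, rfl⟩ a' ⟨m, rfl⟩
    refine ⟨Sum.inr (seg x (max k m + 1), b), ⟨max k m + 1, rfl⟩, ?_, ?_⟩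
    · exact prefix_tg b (seg_prefix x (by omega)) (seg_ne (by omega))
    · exact prefix_tg b (seg_prefix x (by omega)) (seg_ne (by omega))

lemma exists_finset_basic {T : Set (List ℕ)}
    {U : Set (IdealSpace (Relation.TransGen (TeloRel T)))} (hU : IsOpen U) :
    ∀ I ∈ U, ∃ F : Finset Sp, (∀ a ∈ F, a ∈ I.1) ∧
      ∀ J : IdealSpace (Relation.TransGen (TeloRel T)), (∀ a ∈ F, a ∈ J.1) → J ∈ U := by
  classical
  have h : TopologicalSpace.GenerateOpen
      {W | ∃ a : Sp, W = {I : IdealSpace (Relation.TransGen (TeloRel T)) | a ∈ I.1}} U := hU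
  clear hU
  induction h with
  | basic s hs =>
      obtain ⟨a, rfl⟩ := hs
      intro I hI
      exact ⟨{a}, by simpa using hI, fun J hJ => by simpa using hJ a (Finset.mem_singleton_self a)⟩
  | univ => exact fun I _ => ⟨∅, by simp, fun J _ => Set.mem_univ J⟩
  | inter s t hs ht ihs iht =>
      intro I hI
      obtain ⟨Fs, hFs1, hFs2⟩ := ihs I hI.1
      obtain ⟨Ft, hFt1, hFt2⟩ := iht I hI.2
      refine ⟨Fs ∪ Ft, ?_, ?_⟩
      · intro a ha
        rcases Finset.mem_union.1 ha with h | h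
        · exact hFs1 a h
        · exact hFt1 a h
      · intro J hJ
        exact ⟨hFs2 J fun a ha => hJ a (Finset.mem_union_left _ ha),
               hFt2 J fun a ha => hJ a (Finset.mem_union_right _ ha)⟩
  | sUnion S hS ih =>
      intro I hI
      obtain ⟨s, hsS, hIs⟩ := hI
      obtain ⟨F, hF1, hF2⟩ := ih s hsS I hIs
      exact ⟨F, hF1, fun J hJ => ⟨s, hsS, hF2 J hJ⟩⟩


end Telo

theorem stmt12 (T : Set (List ℕ)) (hnil : ([] : List ℕ) ∈ T)
    (hT : ∀ σ ∈ T, ∀ τ, τ <+: σ → τ ∈ T)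
    (hpath : ∃ x : ℕ → ℕ, ∀ k, (List.ofFn fun i : Fin k => x i) ∈ T) :
    T1Space (IdealSpace (Relation.TransGen (TeloRel T))) ∧
      ¬ T2Space (IdealSpace (Relation.TransGen (TeloRel T))) := by
  classical
  obtain ⟨x, hx⟩ := hpath
  have hxseg : ∀ k, Telo.seg x k ∈ T := hx
  constructor
  · -- T1
    refine ⟨fun I => ?_⟩
    rw [← isOpen_compl_iff]
    have hrw : ({I} : Set (IdealSpace (Relation.TransGen (TeloRel T))))ᶜ =
        ⋃ a ∈ {a : Telo.Sp | a ∉ I.1},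
          {J : IdealSpace (Relation.TransGen (TeloRel T)) | a ∈ J.1} := by
      ext J
      simp only [Set.mem_compl_iff, Set.mem_singleton_iff, Set.mem_iUnion, Set.mem_setOf_eq,
        exists_prop]
      constructor
      · intro hJI
        by_contra hcon
        push_neg at hcon
        have hsub : J.1 ⊆ I.1 := fun a haJ =>
          by_contra fun haI => (hcon a haI) haJ
        exact hJI (Subtype.ext (Telo.ideal_incomp hnil hT J.2 I.2 hsub))
      · rintro ⟨a, haI, haJ⟩ rfl
        exact haI haJ
    rw [hrw]
    exact isOpen_biUnion fun a _ => TopologicalSpace.isOpen_generateFrom_of_mem ⟨a, rfl⟩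
  · -- not T2
    intro h2
    let If : IdealSpace (Relation.TransGen (TeloRel T)) :=
      ⟨Telo.Jset T x false, Telo.Jset_ideal hxseg false⟩
    let It : IdealSpace (Relation.TransGen (TeloRel T)) :=
      ⟨Telo.Jset T x true, Telo.Jset_ideal hxseg true⟩
    have hne : If ≠ It := by
      intro h
      have hmem : Sum.inr (([] : List ℕ), false) ∈ It.1 := by
        rw [← h]; exact ⟨0, by simp⟩
      obtain ⟨k, hk⟩ := hmem
      exact absurd hk (by simp)
    obtain ⟨U, V, hUo, hVo, hIU, hIV, hUV⟩ := t2_separation hne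
    obtain ⟨F, hF1, hF2⟩ := Telo.exists_finset_basic hUo If hIU
    obtain ⟨G, hG1, hG2⟩ := Telo.exists_finset_basic hVo It hIV
    set N := (F ∪ G).sup fun a => (Telo.listS a).length with hN
    let K : IdealSpace (Relation.TransGen (TeloRel T)) :=
      ⟨Telo.Dset T (Telo.seg x N), Telo.Dset_ideal _⟩
    have hK : ∀ a ∈ F ∪ G, (∃ k b, a = Sum.inr (Telo.seg x k, b)) → a ∈ K.1 := by
      rintro a ha ⟨k, b, rfl⟩
      have hk : k ≤ N := by
        have := Finset.le_sup (f := fun a => (Telo.listS a).length) ha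
        simpa using this
      exact Telo.prefix_inl b (Telo.seg_prefix x hk)
    have hKU : K ∈ U := hF2 K fun a ha => by
      obtain ⟨k, hk⟩ := hF1 a ha
      exact hK a (Finset.mem_union_left _ ha) ⟨k, false, hk⟩
    have hKV : K ∈ V := hG2 K fun a ha => by
      obtain ⟨k, hk⟩ := hG1 a ha
      exact hK a (Finset.mem_union_right _ ha) ⟨k, true, hk⟩
    exact hUV.le_bot ⟨hKU, hKV⟩
end

section
/- Let T ⊆ List ℕ be a tree (a set of finite sequences closed under taking prefixes) containing the empty sequence, and let ≺ be the transitive closure of the relation R on S = List ℕ ⊕ (List ℕ × Bool) generated as follows (inl σ codes the symbol σ̲, inr (σ, false) codes [σ,∞], inr (σ, true) codes [σ,∞*]): for every σ ∈ List ℕ and b ∈ Bool: inr (σ, b) R inl σ and inl σ R inl σ; for every nonempty σ with immediate predecessor σ⁻ and every b: inr (σ⁻, b) R inr (σ, b); and additionally, whenever σ is nonempty and σ ∉ T: inr (σ⁻, true) R inr (σ, false) and inr (σ, false) R inr (σ, true). If T is well-founded, i.e. for every x : ℕ → ℕ there is k with [x 0, …, x (k−1)] ∉ T, then the space of ideals I(≺)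 is metrizable. -/
namespace Stmt13Aux

open Relation

abbrev TS := List ℕ ⊕ (List ℕ × Bool)

def seqOf : TS → List ℕ
  | Sum.inl σ => σ
  | Sum.inr p => p.1

variable {T : Set (List ℕ)}

lemma step_inl {σ : List ℕ} {y : TS} (h : TeloRel T (Sum.inl σ) y) : y = Sum.inl σ := by
  rcases h with ⟨_, _, h, _⟩ | ⟨_, h1, h2⟩ | ⟨_, _, _, h, _⟩ | ⟨_, _, _, (⟨h, _⟩ | ⟨h, _⟩)⟩ <;>
    simp_all

lemma tg_inl {σ : List ℕ} {y : TS} (h : TransGen (TeloRel T) (Sum.inl σ) y) :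
    y = Sum.inl σ := by
  induction h with
  | single h => exact step_inl h
  | tail _ h ih => subst ih; exact step_inl h

lemma dropLast_ne {σ : List ℕ} (h : σ ≠ []) : σ.dropLast.length < σ.length := by
  have : σ.length ≠ 0 := by simpa using h
  rw [List.length_dropLast]; omega

lemma step_inr {ρ : List ℕ} {c : Bool} {y : TS} (h : TeloRel T (Sum.inr (ρ, c)) y) :
    y = Sum.inl ρ ∨ ∃ ρ' c', y = Sum.inr (ρ', c') ∧ ρ <+: ρ' ∧
      (ρ.length < ρ'.length ∨ (ρ' = ρ ∧ c = false ∧ c' = true)) := by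
  rcases h with ⟨σ, c₀, h1, h2⟩ | ⟨σ, h1, h2⟩ | ⟨σ, c₀, hne, h1, h2⟩ |
      ⟨σ, hne, hσT, (⟨h1, h2⟩ | ⟨h1, h2⟩)⟩
  · left; simp_all
  · simp_all
  · right
    obtain ⟨rfl, rfl⟩ : ρ = σ.dropLast ∧ c = c₀ := by simpa using h1
    exact ⟨σ, _, h2, σ.dropLast_prefix, Or.inl (dropLast_ne hne)⟩
  · right
    obtain ⟨rfl, rfl⟩ : ρ = σ.dropLast ∧ c = true := by simpa using h1
    exact ⟨σ, _, h2, σ.dropLast_prefix, Or.inl (dropLast_ne hne)⟩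
  · right
    obtain ⟨rfl, rfl⟩ : ρ = σ ∧ c = false := by simpa using h1
    exact ⟨_, _, h2, List.prefix_refl _, Or.inr ⟨rfl, rfl, rfl⟩⟩

lemma tg_inr {τ : List ℕ} {c : Bool} {y : TS}
    (h : TransGen (TeloRel T) (Sum.inr (τ, c)) y) :
    (∃ ρ, y = Sum.inl ρ ∧ τ <+: ρ) ∨
    (∃ ρ c', y = Sum.inr (ρ, c') ∧ τ <+: ρ ∧ τ.length < ρ.length) ∨
    (y = Sum.inr (τ, true) ∧ c = false) := by
  induction h with
  | single h =>
    rcases step_inr h with h | ⟨ρ', c', rfl, hpre, hlen | ⟨rfl, rfl, rfl⟩⟩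
    · exact Or.inl ⟨τ, h, List.prefix_refl τ⟩
    · exact Or.inr (Or.inl ⟨ρ', c', rfl, hpre, hlen⟩)
    · exact Or.inr (Or.inr ⟨rfl, rfl⟩)
  | tail _ h ih =>
    rcases ih with ⟨ρ, rfl, hpre⟩ | ⟨ρ, c', rfl, hpre, hlen⟩ | ⟨rfl, rfl⟩
    · exact Or.inl ⟨ρ, step_inl h, hpre⟩
    · rcases step_inr h with h | ⟨ρ'', c'', rfl, hpre', hlen' | ⟨hr, _, hc⟩⟩
      · exact Or.inl ⟨ρ, h, hpre⟩
      · exact Or.inr (Or.inl ⟨ρ'', c'', rfl, hpre.trans hpre', by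
          have := hpre'.length_le; omega⟩)
      · subst hr hc; exact Or.inr (Or.inl ⟨_, _, rfl, hpre, hlen⟩)
    · rcases step_inr h with h | ⟨ρ'', c'', rfl, hpre', hlen' | ⟨_, h2, _⟩⟩
      · exact Or.inl ⟨τ, h, List.prefix_refl τ⟩
      · exact Or.inr (Or.inl ⟨ρ'', c'', rfl, hpre', hlen'⟩)
      · simp at h2

lemma tg_seq {x y : TS} (h : TransGen (TeloRel T) x y) : seqOf x <+: seqOf y := by
  match x with
  | Sum.inl σ => rw [tg_inl h]
  | Sum.inr (τ, c) =>
    rcases tg_inr h with ⟨ρ, rfl, hpre⟩ | ⟨ρ, c', rfl, hpre, _⟩ | ⟨rfl, _⟩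
    · exact hpre
    · exact hpre
    · exact List.prefix_refl _

lemma edge1 (σ : List ℕ) (c : Bool) : TeloRel T (Sum.inr (σ, c)) (Sum.inl σ) :=
  Or.inl ⟨σ, c, rfl, rfl⟩

lemma edge3 {τ : List ℕ} (h : τ ≠ []) (c : Bool) :
    TeloRel T (Sum.inr (τ.dropLast, c)) (Sum.inr (τ, c)) :=
  Or.inr (Or.inr (Or.inl ⟨τ, c, h, rfl, rfl⟩))

lemma edge4a {τ : List ℕ} (h : τ ≠ []) (hT : τ ∉ T) :
    TeloRel T (Sum.inr (τ.dropLast, true)) (Sum.inr (τ, false)) :=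
  Or.inr (Or.inr (Or.inr ⟨τ, h, hT, Or.inl ⟨rfl, rfl⟩⟩))

lemma edge4b {τ : List ℕ} (h : τ ≠ []) (hT : τ ∉ T) :
    TeloRel T (Sum.inr (τ, false)) (Sum.inr (τ, true)) :=
  Or.inr (Or.inr (Or.inr ⟨τ, h, hT, Or.inr ⟨rfl, rfl⟩⟩))

lemma prefix_dropLast {σ τ : List ℕ} (h : σ <+: τ) (hlt : σ.length < τ.length) :
    σ <+: τ.dropLast := by
  rw [List.dropLast_eq_take]; exact List.prefix_take_iff.2 ⟨h, by omega⟩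

lemma tg_chain {σ : List ℕ} (c : Bool) :
    ∀ τ : List ℕ, σ <+: τ → σ.length < τ.length →
      TransGen (TeloRel T) (Sum.inr (σ, c)) (Sum.inr (τ, c)) := by
  intro τ
  induction τ using List.reverseRecOn with
  | nil => intro _ h; simp at h
  | append_singleton l a ih =>
    intro h hlt
    have hne : l ++ [a] ≠ [] := by simp
    have hpre : σ <+: l := by
      have := prefix_dropLast h (by simpa using hlt)
      rwa [List.dropLast_concat] at this
    rcases eq_or_lt_of_le hpre.length_le with heq | hl
    · obtain rfl : σ = l := hpre.eq_of_length heq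
      exact TransGen.single (by simpa [List.dropLast_concat] using edge3 hne c)
    · exact (ih hpre hl).tail (by simpa [List.dropLast_concat] using edge3 hne c)

lemma tg_cross_ft {σ τ : List ℕ} (h : σ <+: τ) (hne : τ ≠ []) (hτ : τ ∉ T) :
    TransGen (TeloRel T) (Sum.inr (σ, false)) (Sum.inr (τ, true)) := by
  rcases eq_or_lt_of_le h.length_le with heq | hl
  · obtain rfl : σ = τ := h.eq_of_length heq
    exact TransGen.single (edge4b hne hτ)
  · exact (tg_chain false τ h hl).tail (edge4b hne hτ)

lemma tg_cross_tf {σ τ : List ℕ} (h : σ <+: τ) (hlt : σ.length < τ.length)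
    (hne : τ ≠ []) (hτ : τ ∉ T) :
    TransGen (TeloRel T) (Sum.inr (σ, true)) (Sum.inr (τ, false)) := by
  have hpre : σ <+: τ.dropLast := prefix_dropLast h hlt
  rcases eq_or_lt_of_le hpre.length_le with heq | hl
  · obtain rfl : σ = τ.dropLast := hpre.eq_of_length heq
    exact TransGen.single (edge4a hne hτ)
  · exact (tg_chain true τ.dropLast hpre hl).tail (edge4a hne hτ)

lemma tg_any {σ τ : List ℕ} (h : σ <+: τ) (hlt : σ.length < τ.length)
    (hne : τ ≠ []) (hτ : τ ∉ T) (c c' : Bool) :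
    TransGen (TeloRel T) (Sum.inr (σ, c)) (Sum.inr (τ, c')) := by
  match c, c' with
  | false, false => exact tg_chain false τ h hlt
  | true, true => exact tg_chain true τ h hlt
  | false, true => exact tg_cross_ft h hne hτ
  | true, false => exact tg_cross_tf h hlt hne hτ

lemma long {I : Set TS} (hI : IsIdeal (TransGen (TeloRel T)) I)
    (hfree : ∀ ρ, Sum.inl ρ ∉ I) :
    ∀ n, ∃ τ c, Sum.inr (τ, c) ∈ I ∧ n < τ.length := by
  have up : ∀ τ (c : Bool), Sum.inr (τ, c) ∈ I →
      ∃ τ' c', Sum.inr (τ', c') ∈ I ∧ τ.length < τ'.length := by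
    intro τ c hb
    obtain ⟨y, hyI, hy, -⟩ := hI.2.2 _ hb _ hb
    rcases tg_inr hy with ⟨ρ, rfl, -⟩ | ⟨ρ, c', rfl, -, hlen⟩ | ⟨rfl, rfl⟩
    · exact absurd hyI (hfree ρ)
    · exact ⟨ρ, c', hyI, hlen⟩
    · obtain ⟨z, hzI, hz, -⟩ := hI.2.2 _ hyI _ hyI
      rcases tg_inr hz with ⟨ρ, rfl, -⟩ | ⟨ρ, c', rfl, -, hlen⟩ | ⟨-, hc⟩
      · exact absurd hzI (hfree ρ)
      · exact ⟨ρ, c', hzI, hlen⟩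
      · simp at hc
  intro n
  induction n with
  | zero =>
    obtain ⟨b, hb⟩ := hI.1
    match b with
    | Sum.inl ρ => exact absurd hb (hfree ρ)
    | Sum.inr (τ, c) =>
      obtain ⟨τ', c', h1, h2⟩ := up τ c hb
      exact ⟨τ', c', h1, by omega⟩
  | succ n ih =>
    obtain ⟨τ, c, h1, h2⟩ := ih
    obtain ⟨τ', c', h3, h4⟩ := up τ c h1
    exact ⟨τ', c', h3, by omega⟩

lemma comp {I : Set TS} (hI : IsIdeal (TransGen (TeloRel T)) I) {b b' : TS}
    (hb : b ∈ I) (hb' : b' ∈ I) :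
    seqOf b <+: seqOf b' ∨ seqOf b' <+: seqOf b := by
  obtain ⟨c, -, h1, h2⟩ := hI.2.2 _ hb _ hb'
  exact List.prefix_or_prefix_of_prefix (tg_seq h1) (tg_seq h2)

lemma key (hnil : ([] : List ℕ) ∈ T) (hT : ∀ σ ∈ T, ∀ τ, τ <+: σ → τ ∈ T)
    (hwf : ∀ x : ℕ → ℕ, ∃ k, (List.ofFn fun i : Fin k => x i) ∉ T)
    {I : Set TS} (hI : IsIdeal (TransGen (TeloRel T)) I) {a : TS} (ha : a ∉ I) :
    ∃ b ∈ I, ¬∃ c, TransGen (TeloRel T) a c ∧ TransGen (TeloRel T) b c := by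
  by_contra hcon
  push_neg at hcon
  apply ha
  by_cases hfree : ∀ ρ, Sum.inl ρ ∉ I
  · match a with
    | Sum.inl σ =>
      exfalso
      obtain ⟨τ, cc, hmem, hlen⟩ := long hI hfree σ.length
      obtain ⟨c, hac, hbc⟩ := hcon _ hmem
      rw [tg_inl hac] at hbc
      have h2 : τ <+: σ := tg_seq hbc
      have := h2.length_le
      omega
    | Sum.inr (σ, c₀) =>
      have hg : ∀ n, ∃ p : List ℕ × Bool, Sum.inr p ∈ I ∧ n < p.1.length := by
        intro n; obtain ⟨τ, c, h1, h2⟩ := long hI hfree n; exact ⟨(τ, c), h1, h2⟩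
      choose g hgI hglen using hg
      set x : ℕ → ℕ := fun n => (g n).1.getD n 0 with hxdef
      obtain ⟨k, hk⟩ := hwf x
      have hL : (List.ofFn fun i : Fin k => x i) <+: (g k).1 := by
        have hlen' : (List.ofFn fun i : Fin k => x i) = (g k).1.take k := by
          apply List.ext_getElem
          · have := hglen k
            simp only [List.length_ofFn, List.length_take]
            omega
          · intro i h1 h2
            simp only [List.getElem_ofFn, List.getElem_take]
            have hgi := hglen i
            have hik : i < k := by simpa using h1
            have : x i = (g i).1.getD i 0 := rfl
            rw [this, List.getD_eq_getElem _ _ (by omega)]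
            have hik2 : i < (g k).1.length := by have := hglen k; omega
            rcases comp hI (hgI i) (hgI k) with hp | hp
            · have hp' : (g i).1 <+: (g k).1 := hp
              exact hp'.getElem _
            · have hp' : (g k).1 <+: (g i).1 := hp
              exact (hp'.getElem hik2).symm
        rw [hlen']
        exact List.take_prefix _ _
      obtain ⟨τ₁, c₁, hmem1, hlen1⟩ := long hI hfree (max σ.length (g k).1.length)
      have hgk : (g k).1 <+: τ₁ := by
        rcases comp hI (hgI k) hmem1 with hp | hp
        · exact hp
        · exfalso
          have h3 : τ₁.length ≤ (g k).1.length := hp.length_le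
          have : (g k).1.length ≤ max σ.length (g k).1.length := le_max_right _ _
          omega
      have hτ₁T : τ₁ ∉ T := fun hmemT => hk (hT _ hmemT _ (hL.trans hgk))
      have hne : τ₁ ≠ [] := by rintro rfl; exact hτ₁T hnil
      obtain ⟨c, hac, hbc⟩ := hcon _ hmem1
      have hlt : σ.length < τ₁.length := lt_of_le_of_lt (le_max_left _ _) hlen1
      have hσ : σ <+: τ₁ := by
        have h1 : σ <+: seqOf c := tg_seq hac
        have h2 : τ₁ <+: seqOf c := tg_seq hbc
        rcases List.prefix_or_prefix_of_prefix h1 h2 with hp | hp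
        · exact hp
        · exfalso; have := hp.length_le; omega
      exact hI.2.1 _ hmem1 _ (tg_any hσ hlt hne hτ₁T c₀ c₁)
  · push_neg at hfree
    obtain ⟨ρ, hρ⟩ := hfree
    obtain ⟨c, hac, hbc⟩ := hcon _ hρ
    rw [tg_inl hbc] at hac
    exact hI.2.1 _ hρ _ hac

end Stmt13Aux

theorem stmt13 (T : Set (List ℕ)) (hnil : ([] : List ℕ) ∈ T)
    (hT : ∀ σ ∈ T, ∀ τ, τ <+: σ → τ ∈ T)
    (hwf : ∀ x : ℕ → ℕ, ∃ k, (List.ofFn fun i : Fin k => x i) ∉ T) :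
    TopologicalSpace.MetrizableSpace (IdealSpace (Relation.TransGen (TeloRel T))) := by
  set r := Relation.TransGen (TeloRel T) with hr
  have hopen : ∀ a : Stmt13Aux.TS, IsOpen {I : IdealSpace r | a ∈ I.1} := fun a =>
    TopologicalSpace.isOpen_generateFrom_of_mem ⟨a, rfl⟩
  have hclosed : ∀ a : Stmt13Aux.TS, IsClosed {I : IdealSpace r | a ∈ I.1} := by
    intro a
    rw [← isOpen_compl_iff]
    have heq : {I : IdealSpace r | a ∈ I.1}ᶜ =
        ⋃ b ∈ {b : Stmt13Aux.TS | ¬∃ c, r a c ∧ r b c}, {I : IdealSpace r | b ∈ I.1} := by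
      ext I
      simp only [Set.mem_compl_iff, Set.mem_setOf_eq, Set.mem_iUnion, exists_prop]
      constructor
      · intro haI
        obtain ⟨b, hbI, hb⟩ := Stmt13Aux.key hnil hT hwf I.2 haI
        exact ⟨b, hb, hbI⟩
      · rintro ⟨b, hb, hbI⟩ haI
        obtain ⟨c, hcI, h1, h2⟩ := I.2.2.2 _ haI _ hbI
        exact hb ⟨c, h1, h2⟩
    rw [heq]
    exact isOpen_biUnion fun b _ => hopen b
  have hgen : (inferInstance : TopologicalSpace (IdealSpace r)) =
      TopologicalSpace.generateFrom
        {U | ∃ a : Stmt13Aux.TS, U = {I : IdealSpace r | a ∈ I.1}} := rfl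
  have hb := TopologicalSpace.isTopologicalBasis_of_subbasis hgen
  have hscount : {U | ∃ a : Stmt13Aux.TS, U = {I : IdealSpace r | a ∈ I.1}}.Countable := by
    have : {U | ∃ a : Stmt13Aux.TS, U = {I : IdealSpace r | a ∈ I.1}} =
        Set.range (fun a : Stmt13Aux.TS => {I : IdealSpace r | a ∈ I.1}) := by
      ext U
      exact ⟨fun ⟨a, h⟩ => ⟨a, h.symm⟩, fun ⟨a, h⟩ => ⟨a, h.symm⟩⟩
    rw [this]
    exact Set.countable_range _
  haveI : SecondCountableTopology (IdealSpace r) :=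
    hb.secondCountableTopology ((Set.countable_setOf_finite_subset hscount).image _)
  haveI : T0Space (IdealSpace r) := by
    refine ⟨fun I J h => ?_⟩
    refine Subtype.ext (Set.ext fun a => ?_)
    exact (inseparable_iff_forall_isOpen.1 h) _ (hopen a)
  haveI : RegularSpace (IdealSpace r) := by
    apply RegularSpace.of_exists_mem_nhds_isClosed_subset
    intro I u hu
    obtain ⟨t, ⟨f, ⟨hfin, hfsub⟩, rfl⟩, hIt, hts⟩ := hb.mem_nhds_iff.1 hu
    refine ⟨⋂₀ f, ?_, ?_, hts⟩
    · exact (hb.isOpen ⟨f, ⟨hfin, hfsub⟩, rfl⟩).mem_nhds hIt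
    · exact isClosed_sInter fun u hu => by obtain ⟨a, rfl⟩ := hfsub hu; exact hclosed a
  haveI : T3Space (IdealSpace r) := ⟨⟩
  exact TopologicalSpace.metrizableSpace_of_t3_secondCountable _
end

section
/- Fix a bijection q : ℕ ≃ ℚ and a predicate A : ℕ → Prop. Let Q = {q i | i ∈ ℕ and ∀ a < i, A a} ⊆ ℚ, and let ≺ be the restriction of the usual strict order < of ℚ to Q. Then ≺ is interpolable (as a relation on Q) if and only if A a holds for every a ∈ ℕ. -/
/-- A relation `r` on `S` is interpolable if for every `y` the initial segment
`{x | r x y}` is nonempty and directed (any two of its elements have an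
`r`-upper bound inside it). -/
def Interpolable {S : Type*} (r : S → S → Prop) : Prop :=
  ∀ y : S, (∃ x, r x y) ∧ ∀ a b, r a y → r b y → ∃ c, r c y ∧ r a c ∧ r b c

theorem stmt14 (q : ℕ ≃ ℚ) (A : ℕ → Prop)
    (Q : Set ℚ) (hQ : Q = {r : ℚ | ∃ i : ℕ, (∀ a < i, A a) ∧ r = q i}) :
    Interpolable (fun x y : Q => (x : ℚ) < (y : ℚ)) ↔ ∀ a : ℕ, A a := by
  classical
  constructor
  · intro hI
    by_contra h
    push_neg at h
    obtain ⟨m, hm⟩ := h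
    have hex : ∃ k, ¬ A k := ⟨m, hm⟩
    set n := Nat.find hex with hn
    have hnA : ¬ A n := Nat.find_spec hex
    have hsub : Q ⊆ q '' (Set.Iic n) := by
      intro r hr
      rw [hQ] at hr
      obtain ⟨i, hi, rfl⟩ := hr
      refine ⟨i, ?_, rfl⟩
      by_contra hgt
      exact hnA (hi n (lt_of_not_ge hgt))
    have hfin : Q.Finite := Set.Finite.subset ((Set.finite_Iic n).image q) hsub
    have hne : Q.Nonempty := ⟨q 0, by
      rw [hQ]; exact ⟨0, fun a ha => absurd ha (Nat.not_lt_zero a), rfl⟩⟩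
    obtain ⟨b, hb, hbmin⟩ := Set.exists_min_image Q id hfin hne
    obtain ⟨⟨x, hx⟩, hlt'⟩ := (hI ⟨b, hb⟩).1
    exact absurd hlt' (not_lt.2 (hbmin x hx))
  · intro hA
    have hmem : ∀ r : ℚ, r ∈ Q := fun r => by
      rw [hQ]; exact ⟨q.symm r, fun a _ => hA a, (q.apply_symm_apply r).symm⟩
    intro y
    constructor
    · exact ⟨⟨(y : ℚ) - 1, hmem _⟩, by simp⟩
    · rintro ⟨a, ha⟩ ⟨b, hb⟩ hay hby
      obtain ⟨c, hc1, hc2⟩ := exists_between (max_lt hay hby)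
      exact ⟨⟨c, hmem c⟩, hc2, lt_of_le_of_lt (le_max_left a b) hc1,
        lt_of_le_of_lt (le_max_right a b) hc1⟩
end

section
/- Let ℓ ≥ 1 and let ≺ be the relation on Fin ℓ × ℚ defined by (m, p) ≺ (n, q) iff m ≤ n and p < q. Call a set S ⊆ Fin ℓ × ℚ an antichain if for all distinct a, b ∈ S neither a ≺ b nor b ≺ a. Then every antichain has at most ℓ elements, and an antichain S is maximal (i.e. for every z ∉ S the set S ∪ {z} is not an antichain) if and only if S has exactly ℓ elements. -/
private lemma stmt16_inj {ℓ : ℕ} {S : Set (Fin ℓ × ℚ)}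
    (hS : IsAntichain (fun a b => a.1 ≤ b.1 ∧ a.2 < b.2) S) :
    Set.InjOn Prod.fst S := by
  intro a ha b hb hab
  by_contra hne
  rcases lt_trichotomy a.2 b.2 with h | h | h
  · exact hS ha hb hne ⟨le_of_eq hab, h⟩
  · exact hne (Prod.ext hab h)
  · exact hS hb ha (Ne.symm hne) ⟨le_of_eq hab.symm, h⟩

private lemma stmt16_ext {ℓ : ℕ} {S : Set (Fin ℓ × ℚ)}
    (hS : IsAntichain (fun a b => a.1 ≤ b.1 ∧ a.2 < b.2) S) (hfin : S.Finite)
    (m : Fin ℓ) (hm : ∀ a ∈ S, a.1 ≠ m) :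
    ∃ q : ℚ, ∀ a ∈ S,
      ¬ (a.1 ≤ m ∧ a.2 < q) ∧ ¬ (m ≤ a.1 ∧ q < a.2) := by
  by_cases hA : {a ∈ S | m < a.1}.Nonempty
  · obtain ⟨a₀, ha₀, hmax⟩ :=
      Set.exists_max_image {a ∈ S | m < a.1} (fun a => a.2)
        (hfin.subset (Set.sep_subset _ _)) hA
    refine ⟨a₀.2, fun a ha => ⟨?_, ?_⟩⟩
    · rintro ⟨h1, h2⟩
      have hlt : a.1 < m := lt_of_le_of_ne h1 (hm a ha)
      have hne : a ≠ a₀ := by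
        intro h; rw [h] at hlt; exact absurd ha₀.2 (not_lt_of_gt hlt)
      exact hS ha ha₀.1 hne ⟨le_of_lt (lt_trans hlt ha₀.2), h2⟩
    · rintro ⟨h1, h2⟩
      have hlt : m < a.1 := lt_of_le_of_ne h1 (Ne.symm (hm a ha))
      exact absurd h2 (not_lt_of_ge (hmax a ⟨ha, hlt⟩))
  · by_cases hSne : S.Nonempty
    · obtain ⟨a₀, ha₀, hmin⟩ := Set.exists_min_image S (fun a => a.2) hfin hSne
      refine ⟨a₀.2, fun a ha => ⟨?_, ?_⟩⟩
      · rintro ⟨_, h2⟩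
        exact absurd h2 (not_lt_of_ge (hmin a ha))
      · rintro ⟨h1, _⟩
        exact hA ⟨a, ha, lt_of_le_of_ne h1 (Ne.symm (hm a ha))⟩
    · exact ⟨0, fun a ha => absurd ⟨a, ha⟩ hSne⟩

theorem stmt16 (ℓ : ℕ) (hℓ : 1 ≤ ℓ) :
    (∀ S : Set (Fin ℓ × ℚ),
      IsAntichain (fun a b => a.1 ≤ b.1 ∧ a.2 < b.2) S → S.Finite ∧ S.ncard ≤ ℓ) ∧
    (∀ S : Set (Fin ℓ × ℚ), IsAntichain (fun a b => a.1 ≤ b.1 ∧ a.2 < b.2) S →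
      ((∀ z ∉ S, ¬ IsAntichain (fun a b => a.1 ≤ b.1 ∧ a.2 < b.2) (insert z S)) ↔
        S.ncard = ℓ)) := by
  have key : ∀ S : Set (Fin ℓ × ℚ),
      IsAntichain (fun a b => a.1 ≤ b.1 ∧ a.2 < b.2) S → S.Finite ∧ S.ncard ≤ ℓ := by
    intro S hS
    have hinj := stmt16_inj hS
    have hfin : S.Finite := Set.Finite.of_finite_image (Set.toFinite _) hinj
    refine ⟨hfin, ?_⟩
    calc S.ncard = (Prod.fst '' S).ncard := (Set.ncard_image_of_injOn hinj).symm
      _ ≤ (Set.univ : Set (Fin ℓ)).ncard :=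
          Set.ncard_le_ncard (Set.subset_univ _) Set.finite_univ
      _ = ℓ := by simp [Set.ncard_univ]
  refine ⟨key, fun S hS => ?_⟩
  obtain ⟨hfin, hle⟩ := key S hS
  have hinj := stmt16_inj hS
  constructor
  · intro hmax
    by_contra hne
    have hlt : S.ncard < ℓ := lt_of_le_of_ne hle hne
    have himg : Prod.fst '' S ≠ Set.univ := by
      intro h
      have : (Prod.fst '' S).ncard = ℓ := by simp [h, Set.ncard_univ]
      rw [Set.ncard_image_of_injOn hinj] at this
      omega
    obtain ⟨m, hm⟩ : ∃ m : Fin ℓ, m ∉ Prod.fst '' S := by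
      by_contra h
      push_neg at h
      exact himg (Set.eq_univ_of_forall h)
    have hm' : ∀ a ∈ S, a.1 ≠ m := fun a ha h => hm ⟨a, ha, h⟩
    obtain ⟨q, hq⟩ := stmt16_ext hS hfin m hm'
    have hzS : (m, q) ∉ S := fun h => hm' _ h rfl
    refine hmax (m, q) hzS (IsAntichain.insert hS ?_ ?_)
    · intro b hb _ hr
      exact (hq b hb).1 hr
    · intro b hb _ hr
      exact (hq b hb).2 hr
  · intro hcard z hz hA
    have himg : Prod.fst '' S = Set.univ := by
      refine Set.eq_of_subset_of_ncard_le (Set.subset_univ _) ?_ Set.finite_univ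
      rw [Set.ncard_image_of_injOn hinj, hcard, Set.ncard_univ]
      simp
    obtain ⟨a, ha, hfst⟩ : ∃ a ∈ S, a.1 = z.1 := by
      have : z.1 ∈ Prod.fst '' S := himg ▸ Set.mem_univ _
      obtain ⟨a, ha, h⟩ := this
      exact ⟨a, ha, h⟩
    have hne : a ≠ z := fun h => hz (h ▸ ha)
    have hsnd : a.2 ≠ z.2 := fun h => hne (Prod.ext hfst h)
    rcases lt_or_gt_of_ne hsnd with h | h
    · exact hA (Set.mem_insert_of_mem _ ha) (Set.mem_insert _ _) hne
        ⟨le_of_eq hfst, h⟩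
    · exact hA (Set.mem_insert _ _) (Set.mem_insert_of_mem _ ha) (Ne.symm hne)
        ⟨le_of_eq hfst.symm, h⟩
end
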